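/- arXiv:2003.00267 — 4 statements merged into one kernel-verified Lean document; each statement's English description precedes it below -/
import Mathlib

section
/- Let τ be a permutation of size k ≥ 1. For every n ≥ 1, the number of bounded affine permutations of size n that avoid τ satisfies |S̃//_n(τ)| ≤ 3^n · |S_n(τ)|. Consequently, lim sup_{n→∞} |S̃//_n(τ)|^{1/n} ≤ 3 · lim sup_{n→∞} |S_n(τ)|^{1/n}. -/
/-- `σ : ℤ → ℤ` is an affine permutation of size `n` (values indexed 1,…,n). -/
def IsAffinePerm (n : ℕ) (σ : ℤ → ℤ) : Prop :=
  Function.Bijective σ ∧ (∀ i : ℤ, σ (i + n) = σ i + n) ∧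
    (∑ i ∈ Finset.Icc (1 : ℤ) (n : ℤ), σ i) = ∑ i ∈ Finset.Icc (1 : ℤ) (n : ℤ), i

/-- Bounded affine permutation of size `n`. -/
def IsBoundedAffinePerm (n : ℕ) (σ : ℤ → ℤ) : Prop :=
  IsAffinePerm n σ ∧ ∀ i : ℤ, |σ i - i| < (n : ℤ)

/-- Ordinary pattern containment. -/
def PermContains {n k : ℕ} (π : Equiv.Perm (Fin n)) (τ : Equiv.Perm (Fin k)) : Prop :=
  ∃ f : Fin k → Fin n, StrictMono f ∧ ∀ s t : Fin k, τ s < τ t ↔ π (f s) < π (f t)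

/-- A function `σ : ℤ → ℤ` contains the ordinary pattern `τ`. -/
def AffContains {k : ℕ} (σ : ℤ → ℤ) (τ : Equiv.Perm (Fin k)) : Prop :=
  ∃ f : Fin k → ℤ, StrictMono f ∧ ∀ s t : Fin k, τ s < τ t ↔ σ (f s) < σ (f t)

/-- The shift `Σ^r σ`. -/
def shiftPerm (r : ℤ) (σ : ℤ → ℤ) : ℤ → ℤ := fun i => σ (i - r) + r

/-- The infinite sum `⊕π : ℤ → ℤ` of a permutation `π` of size `n ≥ 1`,
with the convention that `π` acts (1-indexed) on `{1,…,n}`. -/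
def infiniteSum {n : ℕ} (hn : 0 < n) (π : Equiv.Perm (Fin n)) : ℤ → ℤ := fun i =>
  ((π ⟨((i - 1) % (n : ℤ)).toNat, by
      have h0 : (0 : ℤ) < (n : ℤ) := by exact_mod_cast hn
      have h1 : 0 ≤ (i - 1) % (n : ℤ) := Int.emod_nonneg _ h0.ne'
      have h2 : (i - 1) % (n : ℤ) < (n : ℤ) := Int.emod_lt_of_pos _ h0
      omega⟩ : Fin n).val : ℤ) + 1 + (n : ℤ) * ((i - 1) / (n : ℤ))

/-- `aff(C)`: all shifts of infinite sums of members of `C`. -/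
def AffOfClass (C : (n : ℕ) → Set (Equiv.Perm (Fin n))) : Set (ℤ → ℤ) :=
  {σ | ∃ (m : ℕ) (hm : 0 < m) (π : Equiv.Perm (Fin m)) (r : ℤ),
      π ∈ C m ∧ σ = shiftPerm r (infiniteSum hm π)}

/-- The direct sum `σ ⊕ ρ` of two permutations. -/
def permDirectSum {a b : ℕ} (σ : Equiv.Perm (Fin a)) (ρ : Equiv.Perm (Fin b)) :
    Equiv.Perm (Fin (a + b)) :=
  finSumFinEquiv.symm.trans ((Equiv.sumCongr σ ρ).trans finSumFinEquiv)

/-- A permutation is sum-indecomposable if it is not a sum of two permutations of nonzero size. -/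
def IsSumIndecomposable {n : ℕ} (π : Equiv.Perm (Fin n)) : Prop :=
  ¬ ∃ (a b : ℕ) (_ : 0 < a) (_ : 0 < b) (h : a + b = n)
      (σ : Equiv.Perm (Fin a)) (ρ : Equiv.Perm (Fin b)),
      π = (finCongr h).permCongr (permDirectSum σ ρ)

/-- `π` maps the first `d` positions onto the first `d` values. -/
def IsPrefixInvariant {n : ℕ} (π : Equiv.Perm (Fin n)) (d : ℕ) : Prop :=
  ∀ i : Fin n, ((π i : ℕ) < d ↔ (i : ℕ) < d)

/-- `a(π)`: the size of the first sum-indecomposable block of `π`. -/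
noncomputable def firstBlockSize {n : ℕ} (π : Equiv.Perm (Fin n)) : ℕ :=
  sInf {d : ℕ | 1 ≤ d ∧ d ≤ n ∧ IsPrefixInvariant π d}

/-- `χ(π)`: the number of sum-indecomposable blocks of `π`. -/
noncomputable def numBlocks {n : ℕ} (π : Equiv.Perm (Fin n)) : ℕ :=
  Set.ncard {d : ℕ | 1 ≤ d ∧ d ≤ n ∧ IsPrefixInvariant π d}

/-- `C` is a permutation class: it is closed under pattern containment. -/
def IsPermClass (C : (n : ℕ) → Set (Equiv.Perm (Fin n))) : Prop :=
  ∀ (n k : ℕ) (π : Equiv.Perm (Fin n)) (τ : Equiv.Perm (Fin k)),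
    π ∈ C n → PermContains π τ → τ ∈ C k

/-- `C` is sum closed. -/
def IsSumClosed (C : (n : ℕ) → Set (Equiv.Perm (Fin n))) : Prop :=
  ∀ (a b : ℕ) (σ : Equiv.Perm (Fin a)) (ρ : Equiv.Perm (Fin b)),
    σ ∈ C a → ρ ∈ C b → permDirectSum σ ρ ∈ C (a + b)

/-- The infinite increasing oscillation `𝒪`. -/
def oscillO : ℤ → ℤ := fun i => if Odd i then i + 2 else i - 2

/-- An affine permutation is decomposable if it is a shift of an infinite sum. -/
def IsDecomposableAffine (ω : ℤ → ℤ) : Prop :=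
  ∃ (r : ℤ) (m : ℕ) (hm : 0 < m) (π : Equiv.Perm (Fin m)),
    ω = shiftPerm r (infiniteSum hm π)

/-- Containment of one `ℤ → ℤ` permutation in another. -/
def ContainsAffine (ω ω' : ℤ → ℤ) : Prop :=
  ∃ φ φ' : ℤ → ℤ, StrictMono φ ∧ StrictMono φ' ∧ ∀ i : ℤ, ω (φ i) = φ' (ω' i)

/-- The inversion graph of a function `ℤ → ℤ`. -/
def invGraph (ω : ℤ → ℤ) : SimpleGraph ℤ where
  Adj i j := (i < j ∧ ω j < ω i) ∨ (j < i ∧ ω i < ω j)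
  symm := ⟨fun _ _ h => Or.symm h⟩
  loopless := ⟨by rintro i (⟨h, -⟩ | ⟨h, -⟩) <;> exact lt_irrefl i h⟩

/-- Number of excedances of a permutation (1-indexed: positions `i` with `π(i) > i`). -/
def excCount {n : ℕ} (π : Equiv.Perm (Fin n)) : ℕ :=
  (Finset.univ.filter fun i => i < π i).card

/-- Number of fixed points of a permutation. -/
def numFixedPoints {n : ℕ} (π : Equiv.Perm (Fin n)) : ℕ :=
  (Finset.univ.filter fun i => π i = i).card

/-- Eulerian number `a(n,k)`: permutations of size `n` with `k` excedances. -/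
noncomputable def eulerianA (n k : ℕ) : ℕ := Nat.card {π : Equiv.Perm (Fin n) // excCount π = k}

/-- Derangement Eulerian number `d(n,k)`. -/
noncomputable def derangD (n k : ℕ) : ℕ :=
  Nat.card {π : Equiv.Perm (Fin n) // (∀ i, π i ≠ i) ∧ excCount π = k}

namespace MT

abbrev Mat (m : ℕ) := Fin m → Fin m → Bool

def MContains {m k : ℕ} (M : Mat m) (P : Equiv.Perm (Fin k)) : Prop :=
  ∃ r c : Fin k → Fin m, StrictMono r ∧ StrictMono c ∧ ∀ s, M (r s) (c (P s)) = true

instance {m k : ℕ} (M : Mat m) (P : Equiv.Perm (Fin k)) : Decidable (MContains M P) := by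
  unfold MContains; infer_instance

def ones {m : ℕ} (M : Mat m) : ℕ :=
  (Finset.univ.filter (fun p : Fin m × Fin m => M p.1 p.2 = true)).card

def cmb {m q : ℕ} (I : Fin m) (i : Fin q) : Fin (m * q) :=
  ⟨(I : ℕ) * q + i, by
    calc (I : ℕ) * q + (i : ℕ) < (I : ℕ) * q + q := by omega
    _ = ((I : ℕ) + 1) * q := by ring
    _ ≤ m * q := Nat.mul_le_mul_right q I.2⟩

lemma cmb_lt_cmb_left {m q : ℕ} {I I' : Fin m} (h : I < I') (i i' : Fin q) :
    cmb I i < cmb I' i' := by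
  simp only [cmb, Fin.mk_lt_mk]
  have : ((I : ℕ) + 1) * q ≤ (I' : ℕ) * q := Nat.mul_le_mul_right q h
  have hi := i.2
  have hi' := i'.2
  nlinarith

lemma cmb_lt_cmb_right {m q : ℕ} (I : Fin m) {i i' : Fin q} (h : i < i') :
    cmb I i < cmb I i' := by
  simp only [cmb, Fin.mk_lt_mk]
  omega

def bI {m q : ℕ} (hq : 0 < q) (g : Fin (m * q)) : Fin m :=
  ⟨(g : ℕ) / q, by
    rw [Nat.div_lt_iff_lt_mul hq]; exact g.2⟩

def bi {m q : ℕ} (hq : 0 < q) (g : Fin (m * q)) : Fin q :=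
  ⟨(g : ℕ) % q, Nat.mod_lt _ hq⟩

lemma cmb_bI_bi {m q : ℕ} (hq : 0 < q) (g : Fin (m * q)) :
    cmb (bI hq g) (bi hq g) = g := by
  apply Fin.ext
  simp only [cmb, bI, bi]
  rw [mul_comm]
  exact Nat.div_add_mod _ _

lemma bI_cmb {m q : ℕ} (hq : 0 < q) (I : Fin m) (i : Fin q) :
    bI hq (cmb I i) = I := by
  apply Fin.ext
  simp only [bI, cmb]
  rw [mul_comm, Nat.mul_add_div hq, Nat.div_eq_of_lt i.2]; omega

lemma bi_cmb {m q : ℕ} (hq : 0 < q) (I : Fin m) (i : Fin q) :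
    bi hq (cmb I i) = i := by
  apply Fin.ext
  simp only [bi, cmb]
  rw [mul_comm, Nat.mul_add_mod, Nat.mod_eq_of_lt i.2]


def contr {m q : ℕ} (M : Mat (m * q)) : Mat m :=
  fun I J => decide (∃ i j : Fin q, M (cmb I i) (cmb J j) = true)

lemma contains_of_contr {m q k : ℕ} {M : Mat (m * q)} {P : Equiv.Perm (Fin k)}
    (h : MContains (contr M) P) : MContains M P := by
  obtain ⟨R, C, hR, hC, hE⟩ := h
  have hw : ∀ s : Fin k, ∃ p : Fin q × Fin q,
      M (cmb (R s) p.1) (cmb (C (P s)) p.2) = true := by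
    intro s
    have := hE s
    simp only [contr, decide_eq_true_eq] at this
    obtain ⟨i, j, hij⟩ := this
    exact ⟨(i, j), hij⟩
  choose p hp using hw
  refine ⟨fun s => cmb (R s) (p s).1, fun j => cmb (C j) (p (P.symm j)).2, ?_, ?_, ?_⟩
  · intro s t hst; exact cmb_lt_cmb_left (hR hst) _ _
  · intro s t hst; exact cmb_lt_cmb_left (hC hst) _ _
  · intro s
    simpa [Equiv.symm_apply_apply] using hp s

def transp {m : ℕ} (M : Mat m) : Mat m := fun i j => M j i

lemma contains_of_transp {m k : ℕ} {M : Mat m} {P : Equiv.Perm (Fin k)}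
    (h : MContains (transp M) P.symm) : MContains M P := by
  obtain ⟨r, c, hr, hc, hE⟩ := h
  refine ⟨c, r, hc, hr, fun u => ?_⟩
  have := hE (P u)
  simpa [transp, Equiv.symm_apply_apply] using this

def occRows {m q : ℕ} (M : Mat (m * q)) (I J : Fin m) : Finset (Fin q) :=
  Finset.univ.filter fun i => ∃ j, M (cmb I i) (cmb J j) = true

def occCols {m q : ℕ} (M : Mat (m * q)) (I J : Fin m) : Finset (Fin q) :=
  Finset.univ.filter fun j => ∃ i, M (cmb I i) (cmb J j) = true

lemma occCols_eq_transp {m q : ℕ} (M : Mat (m * q)) (I J : Fin m) :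
    occCols M I J = occRows (transp M) J I := rfl

lemma tall_bound {m q k : ℕ} (P : Equiv.Perm (Fin k)) (hk : 0 < k)
    (M : Mat (m * q)) (hM : ¬ MContains M P) (I : Fin m) :
    (Finset.univ.filter fun J => k ≤ (occRows M I J).card).card ≤ (k - 1) * Nat.choose q k := by
  by_contra hcon
  push_neg at hcon
  -- choice of k-subsets
  set s := (Finset.univ.filter fun J => k ≤ (occRows M I J).card) with hs
  have hFex : ∀ J ∈ s, ∃ t ⊆ occRows M I J, t.card = k := by
    intro J hJ
    rw [hs, Finset.mem_filter] at hJ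
    exact Finset.exists_subset_card_eq hJ.2
  choose! F hFsub hFcard using hFex
  have hmaps : ∀ J ∈ s, F J ∈ Finset.powersetCard k (Finset.univ : Finset (Fin q)) := by
    intro J hJ
    rw [Finset.mem_powersetCard]
    exact ⟨Finset.subset_univ _, hFcard J hJ⟩
  have hlt : (Finset.powersetCard k (Finset.univ : Finset (Fin q))).card * (k - 1) < s.card := by
    rw [Finset.card_powersetCard, Finset.card_univ, Fintype.card_fin]
    calc Nat.choose q k * (k-1) = (k-1) * Nat.choose q k := by ring
    _ < s.card := hcon
  obtain ⟨S, hSmem, hSfib⟩ := Finset.exists_lt_card_fiber_of_mul_lt_card_of_maps_to hmaps hlt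
  rw [Finset.mem_powersetCard] at hSmem
  have hSk : k ≤ (s.filter fun J => F J = S).card := by omega
  obtain ⟨T, hTsub, hTcard⟩ := Finset.exists_subset_card_eq hSk
  set JE := T.orderEmbOfFin hTcard with hJE
  set ρ := S.orderEmbOfFin hSmem.2 with hρ
  have hJmem : ∀ a : Fin k, JE a ∈ s ∧ F (JE a) = S := by
    intro a
    have : JE a ∈ T := Finset.orderEmbOfFin_mem T hTcard a
    have := hTsub this
    rw [Finset.mem_filter] at this
    exact this
  have hocc : ∀ a b : Fin k, ∃ j : Fin q, M (cmb I (ρ b)) (cmb (JE a) j) = true := by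
    intro a b
    have h1 : ρ b ∈ S := Finset.orderEmbOfFin_mem S hSmem.2 b
    have h2 : S ⊆ occRows M I (JE a) := (hJmem a).2 ▸ hFsub (JE a) (hJmem a).1
    have := h2 h1
    rw [occRows, Finset.mem_filter] at this
    exact this.2
  choose w hw using hocc
  apply hM
  refine ⟨fun b => cmb I (ρ b), fun a => cmb (JE a) (w a (P.symm a)), ?_, ?_, ?_⟩
  · intro a b hab; exact cmb_lt_cmb_right I (ρ.strictMono hab)
  · intro a b hab; exact cmb_lt_cmb_left (JE.strictMono hab) _ _
  · intro u
    have := hw (P u) u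
    simpa [Equiv.symm_apply_apply] using this

def onesB {m q : ℕ} (M : Mat (m * q)) (I J : Fin m) : ℕ :=
  (Finset.univ.filter fun p : Fin q × Fin q => M (cmb I p.1) (cmb J p.2) = true).card

lemma ones_eq_sum {m q : ℕ} (hq : 0 < q) (M : Mat (m * q)) :
    ones M = ∑ IJ : Fin m × Fin m, onesB M IJ.1 IJ.2 := by
  rw [ones]
  rw [Finset.card_eq_sum_card_fiberwise
    (f := fun p : Fin (m*q) × Fin (m*q) => ((bI hq p.1, bI hq p.2) : Fin m × Fin m))
    (t := Finset.univ) (fun x _ => Finset.mem_univ _)]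
  apply Finset.sum_congr rfl
  intro IJ _
  rw [onesB]
  apply Finset.card_bij (fun p _ => ((bi hq p.1, bi hq p.2) : Fin q × Fin q))
  · intro p hp
    simp only [Finset.mem_filter, Finset.mem_univ, true_and] at hp ⊢
    obtain ⟨h1, h2⟩ := hp
    have e1 : (IJ.1 : Fin m) = bI hq p.1 := by rw [← (Prod.ext_iff.mp h2).1]
    have e2 : (IJ.2 : Fin m) = bI hq p.2 := by rw [← (Prod.ext_iff.mp h2).2]
    rw [e1, e2, cmb_bI_bi, cmb_bI_bi]
    exact h1
  · intro p hp p' hp' he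
    simp only [Finset.mem_filter] at hp hp'
    have h2 := hp.2
    have h2' := hp'.2
    obtain ⟨ha, hb⟩ := Prod.ext_iff.mp he
    simp only at ha hb
    have e1 : bI hq p.1 = bI hq p'.1 := by
      have u1 := congrArg Prod.fst h2
      have u2 := congrArg Prod.fst h2'
      simp only at u1 u2
      rw [u1, u2]
    have e2 : bI hq p.2 = bI hq p'.2 := by
      have u1 := congrArg Prod.snd h2
      have u2 := congrArg Prod.snd h2'
      simp only at u1 u2
      rw [u1, u2]
    have t1 : p.1 = p'.1 := by
      rw [← cmb_bI_bi hq p.1, ← cmb_bI_bi hq p'.1, e1, ha]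
    have t2 : p.2 = p'.2 := by
      rw [← cmb_bI_bi hq p.2, ← cmb_bI_bi hq p'.2, e2, hb]
    exact Prod.ext t1 t2
  · intro p hp
    simp only [Finset.mem_filter, Finset.mem_univ, true_and] at hp
    refine ⟨(cmb IJ.1 p.1, cmb IJ.2 p.2), ?_, ?_⟩
    · simp only [Finset.mem_filter, Finset.mem_univ, true_and]
      exact ⟨hp, by rw [bI_cmb, bI_cmb]⟩
    · simp only [bi_cmb]

lemma onesB_le_sq {m q : ℕ} (M : Mat (m * q)) (I J : Fin m) : onesB M I J ≤ q * q := by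
  calc onesB M I J ≤ (Finset.univ : Finset (Fin q × Fin q)).card := Finset.card_filter_le _ _
  _ = q * q := by simp [Finset.card_univ]

lemma onesB_le_occ {m q : ℕ} (M : Mat (m * q)) (I J : Fin m) :
    onesB M I J ≤ (occRows M I J).card * (occCols M I J).card := by
  rw [onesB, ← Finset.card_product]
  apply Finset.card_le_card
  intro p hp
  simp only [Finset.mem_filter, Finset.mem_univ, true_and] at hp
  rw [Finset.mem_product]
  constructor
  · rw [occRows, Finset.mem_filter]; exact ⟨Finset.mem_univ _, ⟨p.2, hp⟩⟩
  · rw [occCols, Finset.mem_filter]; exact ⟨Finset.mem_univ _, ⟨p.1, hp⟩⟩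

lemma onesB_zero {m q : ℕ} (M : Mat (m * q)) (I J : Fin m) (h : contr M I J = false) :
    onesB M I J = 0 := by
  rw [onesB, Finset.card_eq_zero, Finset.filter_eq_empty_iff]
  intro p _
  simp only [contr, decide_eq_false_iff_not] at h
  push_neg at h
  exact fun hc => (h p.1 p.2) hc

lemma card_filter_pairs_fst {m : ℕ} (p : Fin m × Fin m → Prop) [DecidablePred p] :
    (Finset.univ.filter p).card = ∑ I : Fin m, (Finset.univ.filter fun J => p (I, J)).card := by
  rw [Finset.card_eq_sum_card_fiberwise (f := Prod.fst) (t := Finset.univ)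
    (fun x _ => Finset.mem_univ _)]
  apply Finset.sum_congr rfl
  intro I _
  apply Finset.card_bij (fun a _ => a.2)
  · intro a ha
    simp only [Finset.mem_filter, Finset.mem_univ, true_and] at ha ⊢
    have : a = (I, a.2) := by
      apply Prod.ext
      · exact ha.2
      · rfl
    rw [← this]; exact ha.1
  · intro a ha b hb he
    simp only [Finset.mem_filter] at ha hb
    apply Prod.ext
    · rw [ha.2, hb.2]
    · exact he
  · intro J hJ
    simp only [Finset.mem_filter, Finset.mem_univ, true_and] at hJ
    refine ⟨(I, J), ?_, rfl⟩
    simp only [Finset.mem_filter, Finset.mem_univ, true_and]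
    exact ⟨hJ, trivial⟩

lemma card_filter_pairs_snd {m : ℕ} (p : Fin m × Fin m → Prop) [DecidablePred p] :
    (Finset.univ.filter p).card = ∑ J : Fin m, (Finset.univ.filter fun I => p (I, J)).card := by
  rw [Finset.card_eq_sum_card_fiberwise (f := Prod.snd) (t := Finset.univ)
    (fun x _ => Finset.mem_univ _)]
  apply Finset.sum_congr rfl
  intro J _
  apply Finset.card_bij (fun a _ => a.1)
  · intro a ha
    simp only [Finset.mem_filter, Finset.mem_univ, true_and] at ha ⊢
    have : a = (a.1, J) := by
      apply Prod.ext
      · rfl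
      · exact ha.2
    rw [← this]; exact ha.1
  · intro a ha b hb he
    simp only [Finset.mem_filter] at ha hb
    apply Prod.ext
    · exact he
    · rw [ha.2, hb.2]
  · intro I hI
    simp only [Finset.mem_filter, Finset.mem_univ, true_and] at hI
    refine ⟨(I, J), ?_, rfl⟩
    simp only [Finset.mem_filter, Finset.mem_univ, true_and]
    exact ⟨hI, trivial⟩

lemma main_step {m q k : ℕ} (P : Equiv.Perm (Fin k)) (hk : 0 < k) (hq : 0 < q)
    (M : Mat (m * q)) (hM : ¬ MContains M P) :
    ones M ≤ (q * q) * (2 * (m * ((k - 1) * Nat.choose q k)))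
      + (k - 1) * (k - 1) * ones (contr M) := by
  have hbl : ∀ IJ : Fin m × Fin m, onesB M IJ.1 IJ.2 ≤
      (if (k ≤ (occRows M IJ.1 IJ.2).card ∨ k ≤ (occCols M IJ.1 IJ.2).card) then q*q else 0)
      + (k - 1) * (k - 1) * (if contr M IJ.1 IJ.2 = true then 1 else 0) := by
    intro IJ
    by_cases htw : (k ≤ (occRows M IJ.1 IJ.2).card ∨ k ≤ (occCols M IJ.1 IJ.2).card)
    · rw [if_pos htw]
      exact le_trans (onesB_le_sq M _ _) (Nat.le_add_right _ _)
    · rw [if_neg htw]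
      push_neg at htw
      by_cases hz : contr M IJ.1 IJ.2 = true
      · rw [if_pos hz]
        have h1 := onesB_le_occ M IJ.1 IJ.2
        have h2 : (occRows M IJ.1 IJ.2).card ≤ k - 1 := by omega
        have h3 : (occCols M IJ.1 IJ.2).card ≤ k - 1 := by omega
        calc onesB M IJ.1 IJ.2 ≤ (occRows M IJ.1 IJ.2).card * (occCols M IJ.1 IJ.2).card := h1
        _ ≤ (k-1) * (k-1) := Nat.mul_le_mul h2 h3
        _ = 0 + (k-1)*(k-1)*1 := by ring
      · have z : contr M IJ.1 IJ.2 = false := by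
          simpa using hz
        simp [onesB_zero M _ _ z]
  have step1 : ones M ≤ ∑ IJ : Fin m × Fin m,
      ((if (k ≤ (occRows M IJ.1 IJ.2).card ∨ k ≤ (occCols M IJ.1 IJ.2).card) then q*q else 0)
      + (k - 1) * (k - 1) * (if contr M IJ.1 IJ.2 = true then 1 else 0)) := by
    rw [ones_eq_sum hq]
    exact Finset.sum_le_sum (fun IJ _ => hbl IJ)
  rw [Finset.sum_add_distrib] at step1
  have step2 : ∑ IJ : Fin m × Fin m,
      (if (k ≤ (occRows M IJ.1 IJ.2).card ∨ k ≤ (occCols M IJ.1 IJ.2).card) then q*q else 0)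
      ≤ (q*q) * (2 * (m * ((k - 1) * Nat.choose q k))) := by
    have e1 : ∑ IJ : Fin m × Fin m,
        (if (k ≤ (occRows M IJ.1 IJ.2).card ∨ k ≤ (occCols M IJ.1 IJ.2).card) then q*q else 0)
        = (Finset.univ.filter (fun IJ : Fin m × Fin m =>
            (k ≤ (occRows M IJ.1 IJ.2).card ∨ k ≤ (occCols M IJ.1 IJ.2).card))).card * (q*q) := by
      rw [← Finset.sum_filter]
      rw [Finset.sum_const, smul_eq_mul]
    rw [e1]
    have e2 : (Finset.univ.filter (fun IJ : Fin m × Fin m =>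
            (k ≤ (occRows M IJ.1 IJ.2).card ∨ k ≤ (occCols M IJ.1 IJ.2).card))).card
        ≤ (Finset.univ.filter (fun IJ : Fin m × Fin m => k ≤ (occRows M IJ.1 IJ.2).card)).card
        + (Finset.univ.filter (fun IJ : Fin m × Fin m => k ≤ (occCols M IJ.1 IJ.2).card)).card := by
      rw [Finset.filter_or]
      exact Finset.card_union_le _ _
    have e3 : (Finset.univ.filter (fun IJ : Fin m × Fin m => k ≤ (occRows M IJ.1 IJ.2).card)).card
        ≤ m * ((k - 1) * Nat.choose q k) := by
      rw [card_filter_pairs_fst]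
      calc ∑ I : Fin m, (Finset.univ.filter fun J => k ≤ (occRows M I J).card).card
          ≤ ∑ _I : Fin m, (k - 1) * Nat.choose q k :=
            Finset.sum_le_sum (fun I _ => tall_bound P hk M hM I)
      _ = m * ((k - 1) * Nat.choose q k) := by
          rw [Finset.sum_const, Finset.card_univ, Fintype.card_fin, smul_eq_mul]
    have e4 : (Finset.univ.filter (fun IJ : Fin m × Fin m => k ≤ (occCols M IJ.1 IJ.2).card)).card
        ≤ m * ((k - 1) * Nat.choose q k) := by
      rw [card_filter_pairs_snd]
      have hM' : ¬ MContains (transp M) P.symm := fun hc => hM (contains_of_transp hc)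
      calc ∑ J : Fin m, (Finset.univ.filter fun I => k ≤ (occCols M I J).card).card
          = ∑ J : Fin m, (Finset.univ.filter fun I => k ≤ (occRows (transp M) J I).card).card := rfl
      _ ≤ ∑ _J : Fin m, (k - 1) * Nat.choose q k :=
            Finset.sum_le_sum (fun J _ => tall_bound P.symm hk (transp M) hM' J)
      _ = m * ((k - 1) * Nat.choose q k) := by
          rw [Finset.sum_const, Finset.card_univ, Fintype.card_fin, smul_eq_mul]
    calc (Finset.univ.filter (fun IJ : Fin m × Fin m =>
            (k ≤ (occRows M IJ.1 IJ.2).card ∨ k ≤ (occCols M IJ.1 IJ.2).card))).card * (q*q)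
        ≤ (m * ((k - 1) * Nat.choose q k) + m * ((k - 1) * Nat.choose q k)) * (q * q) := by
          apply Nat.mul_le_mul_right
          omega
    _ = (q*q) * (2 * (m * ((k - 1) * Nat.choose q k))) := by ring
  have step3 : ∑ IJ : Fin m × Fin m,
      (k - 1) * (k - 1) * (if contr M IJ.1 IJ.2 = true then 1 else 0)
      = (k - 1) * (k - 1) * ones (contr M) := by
    rw [← Finset.mul_sum]
    congr 1
    rw [ones, Finset.card_filter]
  omega

lemma ones_le_square {m : ℕ} (M : Mat m) : ones M ≤ m * m := by
  calc ones M ≤ (Finset.univ : Finset (Fin m × Fin m)).card := Finset.card_filter_le _ _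
  _ = m * m := by simp [Finset.card_univ]

lemma FH_pow {k : ℕ} (P : Equiv.Perm (Fin k)) (hk : 0 < k) :
    ∀ t m : ℕ, m = (k*k) ^ t → ∀ M : Mat m, ¬ MContains M P →
      ones M ≤ (2 * ((k*k) * (k*k)) * ((k - 1) * Nat.choose (k*k) k) + 1) * m := by
  set q := k * k with hqdef
  have hq : 0 < q := Nat.mul_pos hk hk
  set C := 2 * (q * q) * ((k - 1) * Nat.choose q k) + 1 with hC
  intro t
  induction t with
  | zero =>
    intro m hm M hM
    subst hm
    simp only [pow_zero]
    calc ones M ≤ 1 * 1 := ones_le_square M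
    _ ≤ C * 1 := by
      apply Nat.mul_le_mul_right
      omega
  | succ t ih =>
    intro m hm M hM
    rw [pow_succ] at hm
    subst hm
    have hrec := main_step P hk hq M hM
    have hcontr : ¬ MContains (contr M) P := fun hc => hM (contains_of_contr hc)
    have hIH := ih (q ^ t) rfl (contr M) hcontr
    have hkq : (k - 1) * (k - 1) ≤ q - 1 := by
      rw [hqdef]
      obtain ⟨j, rfl⟩ : ∃ j, k = j + 1 := ⟨k - 1, by omega⟩
      have e1 : j + 1 - 1 = j := by omega
      rw [e1]
      have e : (j+1)*(j+1) = j*j + 2*j + 1 := by ring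
      omega
    calc ones M ≤ (q * q) * (2 * ((q^t) * ((k - 1) * Nat.choose q k)))
          + (k - 1) * (k - 1) * ones (contr M) := hrec
    _ ≤ (q * q) * (2 * ((q^t) * ((k - 1) * Nat.choose q k))) + (q - 1) * (C * q ^ t) := by
        apply Nat.add_le_add_left
        exact Nat.mul_le_mul hkq hIH
    _ = (2 * (q * q) * ((k - 1) * Nat.choose q k)) * q ^ t + (q - 1) * C * q ^ t := by ring
    _ ≤ (C - 1) * q ^ t + (q - 1) * C * q ^ t := by
        apply Nat.add_le_add_right
        apply Nat.mul_le_mul_right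
        omega
    _ ≤ C * (q ^ t * q) := by
        have e : (q - 1) * C = q * C - C := by rw [Nat.sub_mul, one_mul]
        have hle : C ≤ q * C := Nat.le_mul_of_pos_left C hq
        have h1 : (C - 1) + (q - 1) * C ≤ C * q := by
          rw [e, mul_comm C q]; omega
        calc (C - 1) * q ^ t + (q - 1) * C * q ^ t = ((C-1) + (q-1)*C) * q ^ t := by ring
        _ ≤ (C * q) * q ^ t := Nat.mul_le_mul_right _ h1
        _ = C * (q ^ t * q) := by ring

def pad {m m' : ℕ} (h : m ≤ m') (M : Mat m) : Mat m' :=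
  fun i j => if hij : (i : ℕ) < m ∧ (j : ℕ) < m then M ⟨i, hij.1⟩ ⟨j, hij.2⟩ else false

lemma contains_of_pad {m m' k : ℕ} (h : m ≤ m') {M : Mat m} {P : Equiv.Perm (Fin k)}
    (hc : MContains (pad h M) P) : MContains M P := by
  obtain ⟨r, c, hr, hcm, hE⟩ := hc
  have hb : ∀ s, (r s : ℕ) < m ∧ (c (P s) : ℕ) < m := by
    intro s
    have := hE s
    rw [pad] at this
    by_contra hcon
    rw [dif_neg hcon] at this
    exact Bool.false_ne_true this
  have hbc : ∀ j, (c j : ℕ) < m := fun j => by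
    have := (hb (P.symm j)).2
    rwa [Equiv.apply_symm_apply] at this
  refine ⟨fun s => ⟨r s, (hb s).1⟩, fun j => ⟨c j, hbc j⟩, ?_, ?_, ?_⟩
  · intro a b hab
    rw [Fin.lt_def]
    exact Fin.lt_def.mp (hr hab)
  · intro a b hab
    rw [Fin.lt_def]
    exact Fin.lt_def.mp (hcm hab)
  · intro s
    have := hE s
    rw [pad, dif_pos ⟨(hb s).1, (hb s).2⟩] at this
    exact this

lemma ones_pad {m m' : ℕ} (h : m ≤ m') (M : Mat m) : ones (pad h M) = ones M := by
  symm
  rw [ones, ones]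
  apply Finset.card_bij (fun (p : Fin m × Fin m) _ =>
    ((Fin.castLE h p.1, Fin.castLE h p.2) : Fin m' × Fin m'))
  · intro p hp
    simp only [Finset.mem_filter, Finset.mem_univ, true_and] at hp ⊢
    rw [pad, dif_pos ⟨p.1.2, p.2.2⟩]
    convert hp using 2 <;> exact Fin.ext rfl
  · intro p hp p' hp' he
    obtain ⟨h1, h2⟩ := Prod.ext_iff.mp he
    exact Prod.ext (Fin.castLE_injective h h1) (Fin.castLE_injective h h2)
  · intro p hp
    simp only [Finset.mem_filter, Finset.mem_univ, true_and] at hp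
    rw [pad] at hp
    by_cases hc : (p.1 : ℕ) < m ∧ (p.2 : ℕ) < m
    · refine ⟨(⟨p.1, hc.1⟩, ⟨p.2, hc.2⟩), ?_, ?_⟩
      · simp only [Finset.mem_filter, Finset.mem_univ, true_and]
        rw [dif_pos hc] at hp
        exact hp
      · apply Prod.ext <;> exact Fin.ext rfl
    · rw [dif_neg hc] at hp
      exact absurd hp Bool.false_ne_true

lemma FH_final {k : ℕ} (P : Equiv.Perm (Fin k)) (hk : 0 < k) :
    ∃ C₁ : ℕ, 0 < C₁ ∧ ∀ m : ℕ, ∀ M : Mat m, ¬ MContains M P → ones M ≤ C₁ * m := by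
  by_cases hk1 : k = 1
  · refine ⟨1, one_pos, ?_⟩
    intro m M hM
    subst hk1
    have hz : ones M = 0 := by
      rw [ones, Finset.card_eq_zero, Finset.filter_eq_empty_iff]
      intro p _ hc
      apply hM
      refine ⟨fun _ => p.1, fun _ => p.2, ?_, ?_, fun s => hc⟩
      · intro a b hab
        exact absurd hab (by rw [Subsingleton.elim a b]; exact lt_irrefl _)
      · intro a b hab
        exact absurd hab (by rw [Subsingleton.elim a b]; exact lt_irrefl _)
    omega
  · have hk2 : 2 ≤ k := by omega
    have hq1 : 1 < k * k := by nlinarith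
    refine ⟨(2 * ((k*k) * (k*k)) * ((k - 1) * Nat.choose (k*k) k) + 1) * (k*k), by positivity, ?_⟩
    intro m M hM
    rcases Nat.eq_zero_or_pos m with h0 | hm
    · subst h0
      have := ones_le_square M
      omega
    · have hex : ∃ t, m ≤ (k*k)^t := ⟨m, le_of_lt (Nat.lt_pow_self hq1 : m < (k*k)^m)⟩
      set t := Nat.find hex with htdef
      have ht : m ≤ (k*k)^t := Nat.find_spec hex
      have hqt : (k*k)^t ≤ (k*k) * m := by
        rcases Nat.eq_zero_or_pos t with h0 | hpos
        · rw [h0, pow_zero]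
          have : 1 ≤ m := hm
          nlinarith
        · obtain ⟨t', ht'⟩ : ∃ t', t = t' + 1 := ⟨t - 1, by omega⟩
          have hnot : ¬ m ≤ (k*k)^t' := Nat.find_min hex (by omega)
          push_neg at hnot
          rw [ht', pow_succ]
          calc (k*k)^t' * (k*k) = (k*k) * (k*k)^t' := by ring
          _ ≤ (k*k) * m := Nat.mul_le_mul_left _ hnot.le
      have hones := FH_pow P hk t ((k*k)^t) rfl (pad ht M) (fun hc => hM (contains_of_pad ht hc))
      rw [ones_pad] at hones
      calc ones M ≤ (2 * ((k*k) * (k*k)) * ((k - 1) * Nat.choose (k*k) k) + 1) * (k*k)^t := hones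
      _ ≤ (2 * ((k*k) * (k*k)) * ((k - 1) * Nat.choose (k*k) k) + 1) * ((k*k) * m) :=
          Nat.mul_le_mul_left _ hqt
      _ = ((2 * ((k*k) * (k*k)) * ((k - 1) * Nat.choose (k*k) k) + 1) * (k*k)) * m := by ring

def AvT {k : ℕ} (P : Equiv.Perm (Fin k)) (m : ℕ) := {M : Mat m // ¬ MContains M P}

noncomputable instance {k m : ℕ} (P : Equiv.Perm (Fin k)) : Fintype (AvT P m) := by
  unfold AvT
  classical
  infer_instance

def onesSet {m : ℕ} (M : Mat m) : Finset (Fin m × Fin m) :=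
  Finset.univ.filter fun p => M p.1 p.2 = true

lemma onesSet_card {m : ℕ} (M : Mat m) : (onesSet M).card = ones M := rfl

def encB {k m : ℕ} (P : Equiv.Perm (Fin k)) (x : AvT P (m * 2)) :
    Σ (M' : AvT P m), ({p : Fin m × Fin m // p ∈ onesSet M'.1} → (Fin 2 → Fin 2 → Bool)) :=
  ⟨⟨contr x.1, fun hc => x.2 (contains_of_contr hc)⟩,
    fun p i j => x.1 (cmb p.1.1 i) (cmb p.1.2 j)⟩

lemma encB_inj {k m : ℕ} (P : Equiv.Perm (Fin k)) : Function.Injective (encB (m := m) P) := by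
  have two_pos : (0:ℕ) < 2 := by norm_num
  have decode : ∀ x : AvT P (m*2), ∀ a b : Fin (m*2),
      x.1 a b = (if hp : ((bI two_pos a, bI two_pos b) : Fin m × Fin m) ∈ onesSet (encB P x).1.1
        then (encB P x).2 ⟨_, hp⟩ (bi two_pos a) (bi two_pos b) else false) := by
    intro x a b
    by_cases hp : ((bI two_pos a, bI two_pos b) : Fin m × Fin m) ∈ onesSet (encB P x).1.1
    · rw [dif_pos hp]
      simp only [encB]
      rw [cmb_bI_bi, cmb_bI_bi]
    · rw [dif_neg hp]
      have hp' : ∀ i j : Fin 2, ¬ x.1 (cmb (bI two_pos a) i) (cmb (bI two_pos b) j) = true :=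
        fun i j h => hp (Finset.mem_filter.mpr ⟨Finset.mem_univ _, decide_eq_true ⟨i, j, h⟩⟩)
      simp only [encB, onesSet, Finset.mem_filter, Finset.mem_univ, true_and] at hp
      simp only [contr, decide_eq_true_eq] at hp
      have := hp' (bi two_pos a) (bi two_pos b)
      rw [cmb_bI_bi, cmb_bI_bi] at this
      simpa using this
  intro x y hxy
  apply Subtype.ext
  funext a b
  rw [decode x a b, decode y a b, hxy]

lemma Klazar_step {k m : ℕ} (P : Equiv.Perm (Fin k)) {C₁ : ℕ}
    (hC : ∀ m' : ℕ, ∀ M : Mat m', ¬ MContains M P → ones M ≤ C₁ * m') :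
    Nat.card (AvT P (m * 2)) ≤ Nat.card (AvT P m) * 16 ^ (C₁ * m) := by
  classical
  have h1 : Nat.card (AvT P (m * 2)) ≤ Nat.card
      (Σ (M' : AvT P m), ({p : Fin m × Fin m // p ∈ onesSet M'.1} → (Fin 2 → Fin 2 → Bool))) :=
    Nat.card_le_card_of_injective _ (encB_inj P)
  have h2 : Nat.card
      (Σ (M' : AvT P m), ({p : Fin m × Fin m // p ∈ onesSet M'.1} → (Fin 2 → Fin 2 → Bool)))
      = ∑ M' : AvT P m, 16 ^ (ones M'.1) := by
    rw [Nat.card_eq_fintype_card, Fintype.card_sigma]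
    apply Finset.sum_congr rfl
    intro M' _
    rw [Fintype.card_fun]
    have e1 : Fintype.card (Fin 2 → Fin 2 → Bool) = 16 := by
      rw [Fintype.card_fun, Fintype.card_fun]
      rfl
    rw [e1]
    congr 1
    rw [← onesSet_card]
    exact Fintype.card_coe _
  have h3 : ∑ M' : AvT P m, 16 ^ (ones M'.1) ≤ ∑ _M' : AvT P m, 16 ^ (C₁ * m) := by
    apply Finset.sum_le_sum
    intro M' _
    apply Nat.pow_le_pow_right (by norm_num)
    exact hC m M'.1 M'.2
  have h4 : ∑ _M' : AvT P m, (16:ℕ) ^ (C₁ * m) = Nat.card (AvT P m) * 16 ^ (C₁ * m) := by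
    rw [Finset.sum_const, Finset.card_univ, smul_eq_mul, Nat.card_eq_fintype_card]
  omega

lemma cardAv_mono {k : ℕ} (P : Equiv.Perm (Fin k)) {m m' : ℕ} (h : m ≤ m') :
    Nat.card (AvT P m) ≤ Nat.card (AvT P m') := by
  apply Nat.card_le_card_of_injective
    (fun x : AvT P m => (⟨pad h x.1, fun hc => x.2 (contains_of_pad h hc)⟩ : AvT P m'))
  intro x y hxy
  apply Subtype.ext
  funext a b
  have := congrArg (fun M : AvT P m' => M.1 (Fin.castLE h a) (Fin.castLE h b)) hxy
  simp only [pad] at this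
  rw [dif_pos ⟨a.2, b.2⟩, dif_pos ⟨a.2, b.2⟩] at this
  simpa using this

lemma cardAv_one {k : ℕ} (P : Equiv.Perm (Fin k)) : Nat.card (AvT P 1) ≤ 2 := by
  have h1 : Nat.card (AvT P 1) ≤ Nat.card (Mat 1) :=
    Nat.card_le_card_of_injective Subtype.val Subtype.val_injective
  have h2 : Nat.card (Mat 1) = 2 := by
    rw [Nat.card_eq_fintype_card]
    rw [Fintype.card_fun, Fintype.card_fun]
    simp
  omega

lemma Klazar_pow {k : ℕ} (P : Equiv.Perm (Fin k)) {C₁ : ℕ}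
    (hC : ∀ m' : ℕ, ∀ M : Mat m', ¬ MContains M P → ones M ≤ C₁ * m') :
    ∀ s : ℕ, Nat.card (AvT P (2 ^ s)) ≤ 2 * 16 ^ (C₁ * 2 ^ (s+1)) := by
  intro s
  induction s with
  | zero =>
    have := cardAv_one P
    have h16 : 1 ≤ (16:ℕ) ^ (C₁ * 2 ^ 1) := Nat.one_le_pow _ _ (by norm_num)
    calc Nat.card (AvT P (2^0)) = Nat.card (AvT P 1) := by norm_num
    _ ≤ 2 := this
    _ ≤ 2 * 16 ^ (C₁ * 2 ^ 1) := by omega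
  | succ s ih =>
    have e : (2:ℕ) ^ (s+1) = 2 ^ s * 2 := by rw [pow_succ]
    rw [e]
    calc Nat.card (AvT P (2 ^ s * 2)) ≤ Nat.card (AvT P (2^s)) * 16 ^ (C₁ * 2^s) :=
        Klazar_step P hC
    _ ≤ (2 * 16 ^ (C₁ * 2 ^ (s+1))) * 16 ^ (C₁ * 2^s) :=
        Nat.mul_le_mul_right _ ih
    _ = 2 * 16 ^ (C₁ * 2 ^ (s+1) + C₁ * 2^s) := by rw [pow_add]; ring
    _ ≤ 2 * 16 ^ (C₁ * 2 ^ (s+2)) := by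
        apply Nat.mul_le_mul_left
        apply Nat.pow_le_pow_right (by norm_num)
        have e1 : (2:ℕ) ^ (s+1) = 2 * 2^s := by rw [pow_succ]; ring
        have e2 : (2:ℕ) ^ (s+2) = 4 * 2^s := by rw [pow_succ, pow_succ]; ring
        calc C₁ * 2 ^ (s+1) + C₁ * 2^s = C₁ * (2^(s+1) + 2^s) := by ring
        _ ≤ C₁ * 2^(s+2) := by
            apply Nat.mul_le_mul_left
            omega
        _ = C₁ * 2^(s+2) := rfl

lemma cardAv_bound {k : ℕ} (P : Equiv.Perm (Fin k)) {C₁ : ℕ}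
    (hC : ∀ m' : ℕ, ∀ M : Mat m', ¬ MContains M P → ones M ≤ C₁ * m') :
    ∀ n : ℕ, 1 ≤ n → Nat.card (AvT P n) ≤ 2 * (16 ^ (4 * C₁)) ^ n := by
  intro n hn
  have hex : ∃ s, n ≤ 2 ^ s := ⟨n, le_of_lt (Nat.lt_pow_self (by norm_num : 1 < 2) : n < 2^n)⟩
  set s := Nat.find hex with hsdef
  have hs : n ≤ 2 ^ s := Nat.find_spec hex
  have h2s : 2 ^ s ≤ 2 * n := by
    rcases Nat.eq_zero_or_pos s with h0 | hpos
    · rw [h0]; omega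
    · obtain ⟨s', hs'⟩ : ∃ s', s = s' + 1 := ⟨s - 1, by omega⟩
      have hnot : ¬ n ≤ 2 ^ s' := Nat.find_min hex (by omega)
      push_neg at hnot
      rw [hs', pow_succ]
      omega
  calc Nat.card (AvT P n) ≤ Nat.card (AvT P (2 ^ s)) := cardAv_mono P hs
  _ ≤ 2 * 16 ^ (C₁ * 2 ^ (s+1)) := Klazar_pow P hC s
  _ ≤ 2 * 16 ^ (C₁ * (4 * n)) := by
      apply Nat.mul_le_mul_left
      apply Nat.pow_le_pow_right (by norm_num)
      apply Nat.mul_le_mul_left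
      rw [pow_succ]
      omega
  _ = 2 * (16 ^ (4 * C₁)) ^ n := by
      rw [← pow_mul]
      ring_nf

def permMat {n : ℕ} (π : Equiv.Perm (Fin n)) : Mat n := fun i j => decide (π i = j)

lemma permContains_of_mat {n k : ℕ} {π : Equiv.Perm (Fin n)} {τ : Equiv.Perm (Fin k)}
    (h : MContains (permMat π) τ) : PermContains π τ := by
  obtain ⟨r, c, hr, hc, hE⟩ := h
  have hE' : ∀ s, π (r s) = c (τ s) := by
    intro s
    have := hE s
    simpa [permMat] using this
  refine ⟨r, hr, fun s t => ?_⟩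
  rw [hE' s, hE' t]
  exact (hc.lt_iff_lt).symm

lemma g_bound {kk : ℕ} (τ : Equiv.Perm (Fin kk)) (hk : 0 < kk) :
    ∃ K : ℕ, 1 ≤ K ∧ ∀ n : ℕ, 1 ≤ n →
      Nat.card {π : Equiv.Perm (Fin n) // ¬ PermContains π τ} ≤ 2 * K ^ n := by
  obtain ⟨C₁, hC₁, hC⟩ := FH_final τ hk
  refine ⟨16 ^ (4 * C₁), Nat.one_le_pow _ _ (by norm_num), ?_⟩
  intro n hn
  have hinj : Nat.card {π : Equiv.Perm (Fin n) // ¬ PermContains π τ} ≤ Nat.card (AvT τ n) := by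
    apply Nat.card_le_card_of_injective
      (fun x : {π : Equiv.Perm (Fin n) // ¬ PermContains π τ} =>
        (⟨permMat x.1, fun hc => x.2 (permContains_of_mat hc)⟩ : AvT τ n))
    intro x y hxy
    apply Subtype.ext
    apply Equiv.ext
    intro i
    have := congrArg (fun M : AvT τ n => M.1 i (y.1 i)) hxy
    simp only [permMat] at this
    have h2 : decide ((x.1 : Equiv.Perm (Fin n)) i = y.1 i) = true := by
      rw [this]
      simp
    simpa using h2
  calc Nat.card {π : Equiv.Perm (Fin n) // ¬ PermContains π τ} ≤ Nat.card (AvT τ n) := hinj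
  _ ≤ 2 * (16 ^ (4 * C₁)) ^ n := cardAv_bound τ hC n hn

end MT

namespace AffInj

variable {n : ℕ}

lemma shift_mul {σ : ℤ → ℤ} (hper : ∀ i : ℤ, σ (i + (n:ℤ)) = σ i + n) :
    ∀ (t i : ℤ), σ (i + t * n) = σ i + t * n := by
  have hneg : ∀ i : ℤ, σ (i - n) = σ i - n := by
    intro i
    have := hper (i - n)
    simp only [sub_add_cancel] at this
    omega
  intro t
  induction t using Int.induction_on with
  | zero => simp
  | succ t ih =>
    intro i
    have e : i + ((t:ℤ)+1) * n = (i + t * n) + n := by ring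
    rw [e, hper, ih]
    ring
  | pred t ih =>
    intro i
    have e : i + (-(t:ℤ)-1) * n = (i + (-(t:ℤ)) * n) - n := by ring
    rw [e, hneg, ih]
    ring

/-- the window of `σ` -/
def win (n : ℕ) (σ : ℤ → ℤ) : Fin n → ℤ := fun j => σ ((j : ℤ) + 1)

lemma win_inj (σ : ℤ → ℤ) (hb : Function.Injective σ) :
    Function.Injective (win n σ) := by
  intro a b hab
  have := hb hab
  have h2 : ((a:ℕ):ℤ) = b := by omega
  apply Fin.ext
  exact_mod_cast h2

lemma win_bound (σ : ℤ → ℤ) (hbd : ∀ i : ℤ, |σ i - i| < (n : ℤ)) (j : Fin n) :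
    2 - (n:ℤ) ≤ win n σ j ∧ win n σ j ≤ 2*n - 1 := by
  have h1 := hbd ((j:ℤ) + 1)
  rw [abs_lt] at h1
  have h2 : (j:ℤ) < n := by exact_mod_cast j.2
  have h3 : 0 ≤ (j:ℤ) := by positivity
  unfold win
  omega

def resf (hn : 0 < n) (σ : ℤ → ℤ) : Fin n → Fin n := fun j =>
  ⟨((win n σ j - 1) % n).toNat, by
    have h0 : (0:ℤ) < n := by exact_mod_cast hn
    have h1 : 0 ≤ (win n σ j - 1) % n := Int.emod_nonneg _ h0.ne'
    have h2 : (win n σ j - 1) % n < n := Int.emod_lt_of_pos _ h0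
    omega⟩

lemma resf_inj (hn : 0 < n) (σ : ℤ → ℤ) (hb : Function.Bijective σ)
    (hper : ∀ i : ℤ, σ (i + (n:ℤ)) = σ i + n) :
    Function.Injective (resf hn σ) := by
  intro a b hab
  have h0 : (0:ℤ) < n := by exact_mod_cast hn
  have hmod : (win n σ a - 1) % n = (win n σ b - 1) % n := by
    have h3 := congrArg (fun x : Fin n => ((x : ℕ) : ℤ)) hab
    simp only [resf, Fin.val_mk] at h3
    have h1 : 0 ≤ (win n σ a - 1) % n := Int.emod_nonneg _ h0.ne'
    have h2 : 0 ≤ (win n σ b - 1) % n := Int.emod_nonneg _ h0.ne'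
    omega
  have hdvd : (n:ℤ) ∣ (win n σ b - 1) - (win n σ a - 1) := Int.ModEq.dvd hmod
  obtain ⟨t, ht⟩ := hdvd
  have hwb : win n σ b = win n σ a + t * n := by linarith [ht]
  have : σ ((b:ℤ) + 1) = σ (((a:ℤ) + 1) + t * n) := by
    rw [shift_mul hper]
    exact hwb
  have heq := hb.injective this
  have h2 : (b:ℤ) = (a:ℤ) + t * n := by omega
  have ha : (a:ℤ) < n := by exact_mod_cast a.2
  have hbn : (b:ℤ) < n := by exact_mod_cast b.2
  have ha0 : 0 ≤ (a:ℤ) := by positivity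
  have hb0 : 0 ≤ (b:ℤ) := by positivity
  have ht0 : t = 0 := by
    rcases lt_trichotomy t 0 with h | h | h
    · nlinarith
    · exact h
    · nlinarith
  apply Fin.ext
  have hba : (b:ℤ) = (a:ℤ) := by
    rw [ht0] at h2
    omega
  omega

def blockOf (n : ℕ) (x : ℤ) : Fin 3 :=
  if x ≤ 0 then 0 else if x ≤ n then 1 else 2

/-- reconstruction of a value from its residue and block -/
def cfun (n : ℕ) (e : Fin n → Fin 3) : Fin n → ℤ := fun r =>
  ((r:ℤ) + 1) + n * (((e r : ℕ) : ℤ) - 1)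

lemma win_eq_cfun (hn : 0 < n) (σ : ℤ → ℤ) (hbd : ∀ i : ℤ, |σ i - i| < (n : ℤ))
    (e : Fin n → Fin 3) (j : Fin n)
    (he : e (resf hn σ j) = blockOf n (win n σ j)) :
    cfun n e (resf hn σ j) = win n σ j := by
  have h0 : (0:ℤ) < n := by exact_mod_cast hn
  obtain ⟨hb1, hb2⟩ := win_bound σ hbd j
  set x := win n σ j with hx
  have hres : ((resf hn σ j : ℕ) : ℤ) = (x - 1) % n := by
    simp only [resf]
    have h1 : 0 ≤ (x - 1) % n := Int.emod_nonneg _ h0.ne'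
    rw [Int.toNat_of_nonneg h1]
  rw [cfun, he, hres]
  set b : ℤ := ((blockOf n x : ℕ) : ℤ) - 1 with hbdef
  have hrem : (x - 1) % n = (x - 1) - n * b := by
    have e1 : x - 1 = ((x - 1) - n * b) + n * b := by ring
    conv_lhs => rw [e1]
    rw [Int.add_mul_emod_self_left]
    have hcase : (x ≤ 0 ∧ b = -1) ∨ ((1 ≤ x ∧ x ≤ n) ∧ b = 0) ∨ ((n+1 ≤ x) ∧ b = 1) := by
      rw [hbdef]
      unfold blockOf
      split_ifs with c1 c2
      · left; exact ⟨c1, by norm_num⟩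
      · right; left; exact ⟨⟨by omega, c2⟩, by norm_num⟩
      · right; right; exact ⟨by omega, by norm_num⟩
    apply Int.emod_eq_of_lt
    · rcases hcase with ⟨h1, h2⟩ | ⟨h1, h2⟩ | ⟨h1, h2⟩ <;> rw [h2] <;> omega
    · rcases hcase with ⟨h1, h2⟩ | ⟨h1, h2⟩ | ⟨h1, h2⟩ <;> rw [h2] <;> omega
  rw [hrem]
  ring

def wset (n : ℕ) (σ : ℤ → ℤ) : Finset ℤ := Finset.univ.image (win n σ)

lemma wset_card (σ : ℤ → ℤ) (hinj : Function.Injective (win n σ)) : (wset n σ).card = n := by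
  rw [wset, Finset.card_image_of_injective _ hinj, Finset.card_univ, Fintype.card_fin]

lemma win_mem_wset (σ : ℤ → ℤ) (j : Fin n) : win n σ j ∈ wset n σ :=
  Finset.mem_image_of_mem _ (Finset.mem_univ j)

noncomputable def permOf (σ : ℤ → ℤ) (hinj : Function.Injective (win n σ)) : Fin n → Fin n :=
  fun j => ((wset n σ).orderIsoOfFin (wset_card σ hinj)).symm ⟨win n σ j, win_mem_wset σ j⟩

lemma permOf_lt_iff (σ : ℤ → ℤ) (hinj : Function.Injective (win n σ)) (j j' : Fin n) :
    permOf σ hinj j < permOf σ hinj j' ↔ win n σ j < win n σ j' := by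
  unfold permOf
  rw [OrderIso.lt_iff_lt]
  exact Subtype.mk_lt_mk

lemma permOf_inj (σ : ℤ → ℤ) (hinj : Function.Injective (win n σ)) :
    Function.Injective (permOf σ hinj) := by
  intro a b h
  have h2 := congrArg (fun z => ((((wset n σ).orderIsoOfFin (wset_card σ hinj)) z : wset n σ) : ℤ)) h
  simp only [permOf, OrderIso.apply_symm_apply] at h2
  exact hinj h2

noncomputable def permEquiv (σ : ℤ → ℤ) (hinj : Function.Injective (win n σ)) :
    Equiv.Perm (Fin n) :=
  Equiv.ofBijective _ ((Finite.injective_iff_bijective).mp (permOf_inj σ hinj))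

lemma permEquiv_apply (σ : ℤ → ℤ) (hinj : Function.Injective (win n σ)) (j : Fin n) :
    permEquiv σ hinj j = permOf σ hinj j := rfl

lemma win_eq_iso (σ : ℤ → ℤ) (hinj : Function.Injective (win n σ)) (j : Fin n) :
    (((wset n σ).orderIsoOfFin (wset_card σ hinj) (permOf σ hinj j) : wset n σ) : ℤ)
      = win n σ j := by
  unfold permOf
  rw [OrderIso.apply_symm_apply]

lemma avoid_transfer (σ : ℤ → ℤ) (hinj : Function.Injective (win n σ)) {k : ℕ}
    (τ : Equiv.Perm (Fin k)) (hav : ¬ AffContains σ τ) :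
    ¬ PermContains (permEquiv σ hinj) τ := by
  rintro ⟨f, hf, hcond⟩
  apply hav
  refine ⟨fun s => ((f s : ℕ) : ℤ) + 1, ?_, ?_⟩
  · intro s t hst
    have := hf hst
    have h2 : (f s : ℕ) < (f t : ℕ) := this
    simp only
    omega
  · intro s t
    rw [hcond s t, permEquiv_apply, permEquiv_apply, permOf_lt_iff]
    rfl

noncomputable def resEquiv (hn : 0 < n) (σ : ℤ → ℤ) (hb : Function.Bijective σ)
    (hper : ∀ i : ℤ, σ (i + (n:ℤ)) = σ i + n) : Fin n ≃ Fin n :=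
  Equiv.ofBijective _ ((Finite.injective_iff_bijective).mp (resf_inj hn σ hb hper))

noncomputable def Emap (hn : 0 < n) (σ : ℤ → ℤ) (hb : Function.Bijective σ)
    (hper : ∀ i : ℤ, σ (i + (n:ℤ)) = σ i + n) : Fin n → Fin 3 :=
  fun r => blockOf n (win n σ ((resEquiv hn σ hb hper).symm r))

lemma Emap_res (hn : 0 < n) (σ : ℤ → ℤ) (hb : Function.Bijective σ)
    (hper : ∀ i : ℤ, σ (i + (n:ℤ)) = σ i + n) (j : Fin n) :
    Emap hn σ hb hper (resf hn σ j) = blockOf n (win n σ j) := by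
  unfold Emap
  have h1 : resf hn σ j = resEquiv hn σ hb hper j := rfl
  rw [h1, Equiv.symm_apply_apply]

lemma wset_eq_cfun_image (hn : 0 < n) (σ : ℤ → ℤ) (hb : Function.Bijective σ)
    (hper : ∀ i : ℤ, σ (i + (n:ℤ)) = σ i + n) (hbd : ∀ i : ℤ, |σ i - i| < (n : ℤ)) :
    wset n σ = Finset.univ.image (cfun n (Emap hn σ hb hper)) := by
  ext x
  simp only [wset, Finset.mem_image, Finset.mem_univ, true_and]
  constructor
  · rintro ⟨j, rfl⟩
    exact ⟨resf hn σ j, win_eq_cfun hn σ hbd _ j (Emap_res hn σ hb hper j)⟩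
  · rintro ⟨r, rfl⟩
    obtain ⟨j, hj⟩ := ((Finite.injective_iff_bijective).mp (resf_inj hn σ hb hper)).surjective r
    exact ⟨j, by rw [← hj, win_eq_cfun hn σ hbd _ j (Emap_res hn σ hb hper j)]⟩

lemma iso_val_congr {s t : Finset ℤ} (hst : s = t) (h1 : s.card = n) (h2 : t.card = n)
    (a : Fin n) :
    ((s.orderIsoOfFin h1 a : s) : ℤ) = ((t.orderIsoOfFin h2 a : t) : ℤ) := by
  subst hst
  rfl

lemma ext_from_window (hn : 0 < n) (σ σ' : ℤ → ℤ)
    (hper : ∀ i : ℤ, σ (i + (n:ℤ)) = σ i + n)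
    (hper' : ∀ i : ℤ, σ' (i + (n:ℤ)) = σ' i + n)
    (hwin : ∀ j : Fin n, win n σ j = win n σ' j) : σ = σ' := by
  funext i
  have h0 : (0:ℤ) < n := by exact_mod_cast hn
  have h1 : 0 ≤ (i - 1) % n := Int.emod_nonneg _ h0.ne'
  have h2 : (i - 1) % n < n := Int.emod_lt_of_pos _ h0
  set jn : Fin n := ⟨((i - 1) % n).toNat, by omega⟩ with hjn
  have hcast : ((jn : ℕ) : ℤ) = (i - 1) % n := by
    rw [hjn]
    simp only [Fin.val_mk]
    omega
  have hdec : i = (((jn : ℕ) : ℤ) + 1) + ((i - 1) / n) * n := by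
    rw [hcast]
    have := Int.mul_ediv_add_emod (i - 1) n
    linarith [this]
  calc σ i = σ ((((jn : ℕ) : ℤ) + 1) + ((i - 1) / n) * n) := by rw [← hdec]
  _ = σ (((jn : ℕ) : ℤ) + 1) + ((i - 1) / n) * n := shift_mul hper _ _
  _ = σ' (((jn : ℕ) : ℤ) + 1) + ((i - 1) / n) * n := by
      have := hwin jn
      unfold win at this
      rw [this]
  _ = σ' ((((jn : ℕ) : ℤ) + 1) + ((i - 1) / n) * n) := (shift_mul hper' _ _).symm
  _ = σ' i := by rw [← hdec]

theorem affine_card_bound (hn : 0 < n) {k : ℕ} (τ : Equiv.Perm (Fin k)) :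
    Nat.card {σ : ℤ → ℤ // IsBoundedAffinePerm n σ ∧ ¬ AffContains σ τ} ≤
      3 ^ n * Nat.card {π : Equiv.Perm (Fin n) // ¬ PermContains π τ} := by
  classical
  have hwinj : ∀ (x : {σ : ℤ → ℤ // IsBoundedAffinePerm n σ ∧ ¬ AffContains σ τ}),
      Function.Injective (win n x.1) := fun x => win_inj x.1 x.2.1.1.1.injective
  have key : Nat.card {σ : ℤ → ℤ // IsBoundedAffinePerm n σ ∧ ¬ AffContains σ τ} ≤
      Nat.card ((Fin n → Fin 3) × {π : Equiv.Perm (Fin n) // ¬ PermContains π τ}) := by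
    apply Nat.card_le_card_of_injective
      (fun x => (Emap hn x.1 x.2.1.1.1 x.2.1.1.2.1,
        ⟨permEquiv x.1 (hwinj x), avoid_transfer x.1 (hwinj x) τ x.2.2⟩))
    intro x y hxy
    have hE : Emap hn x.1 x.2.1.1.1 x.2.1.1.2.1 = Emap hn y.1 y.2.1.1.1 y.2.1.1.2.1 :=
      (Prod.ext_iff.mp hxy).1
    have hP : permEquiv x.1 (hwinj x) = permEquiv y.1 (hwinj y) := by
      have := (Prod.ext_iff.mp hxy).2
      exact Subtype.ext_iff.mp this
    have hws : wset n x.1 = wset n y.1 := by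
      rw [wset_eq_cfun_image hn x.1 x.2.1.1.1 x.2.1.1.2.1 x.2.1.2,
        wset_eq_cfun_image hn y.1 y.2.1.1.1 y.2.1.1.2.1 y.2.1.2, hE]
    have hwin : ∀ j : Fin n, win n x.1 j = win n y.1 j := by
      intro j
      rw [← win_eq_iso x.1 (hwinj x) j, ← win_eq_iso y.1 (hwinj y) j]
      have hpj : permOf x.1 (hwinj x) j = permOf y.1 (hwinj y) j := by
        rw [← permEquiv_apply, ← permEquiv_apply, hP]
      rw [← hpj]
      exact iso_val_congr hws _ _ _
    exact Subtype.ext (ext_from_window hn x.1 y.1 x.2.1.1.2.1 y.2.1.1.2.1 hwin)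
  have hcard : Nat.card ((Fin n → Fin 3) × {π : Equiv.Perm (Fin n) // ¬ PermContains π τ})
      = 3 ^ n * Nat.card {π : Equiv.Perm (Fin n) // ¬ PermContains π τ} := by
    rw [Nat.card_prod]
    congr 1
    rw [Nat.card_eq_fintype_card, Fintype.card_fun]
    simp
  omega

end AffInj

namespace Glue

lemma rpow_pow_root (x : ℝ) (hx : 0 ≤ x) {n : ℕ} (hn : 1 ≤ n) :
    ((x ^ n : ℝ)) ^ (1 / (n:ℝ)) = x := by
  have hn0 : (n:ℝ) ≠ 0 := by positivity
  rw [← Real.rpow_natCast x n, ← Real.rpow_mul hx]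
  rw [mul_one_div_cancel hn0, Real.rpow_one]

lemma limsup_glue (f g : ℕ → ℕ) (K : ℕ) (hK : 1 ≤ K)
    (hfg : ∀ n, 1 ≤ n → f n ≤ 3 ^ n * g n)
    (hgK : ∀ n, 1 ≤ n → g n ≤ 2 * K ^ n) :
    Filter.limsup (fun n : ℕ => (f n : ℝ) ^ (1 / (n:ℝ))) Filter.atTop ≤
      3 * Filter.limsup (fun n : ℕ => (g n : ℝ) ^ (1 / (n:ℝ))) Filter.atTop := by
  have hFnonneg : ∀ n : ℕ, (0:ℝ) ≤ (f n : ℝ) ^ (1 / (n:ℝ)) :=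
    fun n => Real.rpow_nonneg (Nat.cast_nonneg _) _
  have hGnonneg : ∀ n : ℕ, (0:ℝ) ≤ (g n : ℝ) ^ (1 / (n:ℝ)) :=
    fun n => Real.rpow_nonneg (Nat.cast_nonneg _) _
  rw [Filter.limsup_eq, Filter.limsup_eq]
  set SF := {a : ℝ | ∀ᶠ (n:ℕ) in Filter.atTop, (f n : ℝ) ^ (1 / (n:ℝ)) ≤ a} with hSF
  set SG := {a : ℝ | ∀ᶠ (n:ℕ) in Filter.atTop, (g n : ℝ) ^ (1 / (n:ℝ)) ≤ a} with hSG
  have hSFbdd : BddBelow SF := by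
    refine ⟨0, fun a ha => ?_⟩
    rw [hSF] at ha
    obtain ⟨n, hn⟩ := ha.exists
    exact le_trans (hFnonneg n) hn
  have hGbound : ((2*K : ℕ) : ℝ) ∈ SG := by
    rw [hSG]
    simp only [Set.mem_setOf_eq]
    filter_upwards [Filter.eventually_ge_atTop 1] with n hn
    have h1 : (g n : ℝ) ≤ (((2*K : ℕ) : ℝ)) ^ (n:ℕ) := by
      have h2 : g n ≤ (2*K)^n := by
        calc g n ≤ 2 * K ^ n := hgK n hn
        _ ≤ 2^n * K^n := by
            apply Nat.mul_le_mul_right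
            calc 2 = 2^1 := by norm_num
            _ ≤ 2^n := Nat.pow_le_pow_right (by norm_num) hn
        _ = (2*K)^n := by rw [mul_pow]
      exact_mod_cast h2
    calc (g n : ℝ) ^ (1 / (n:ℝ)) ≤ ((((2*K : ℕ) : ℝ)) ^ (n:ℕ)) ^ (1 / (n:ℝ)) :=
        Real.rpow_le_rpow (Nat.cast_nonneg _) h1 (by positivity)
    _ = ((2*K : ℕ) : ℝ) := rpow_pow_root _ (Nat.cast_nonneg _) hn
  have hSGne : SG.Nonempty := ⟨_, hGbound⟩
  have key : ∀ b ∈ SG, sInf SF ≤ 3 * b := by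
    intro b hb
    apply csInf_le hSFbdd
    rw [hSF]
    simp only [Set.mem_setOf_eq]
    rw [hSG] at hb
    simp only [Set.mem_setOf_eq] at hb
    filter_upwards [hb, Filter.eventually_ge_atTop 1] with n hbn hn
    have h1 : (f n : ℝ) ≤ ((3:ℝ)^(n:ℕ)) * (g n : ℝ) := by
      have := hfg n hn
      have h2 : (f n : ℝ) ≤ ((3^n * g n : ℕ) : ℝ) := by exact_mod_cast this
      calc (f n : ℝ) ≤ ((3^n * g n : ℕ) : ℝ) := h2
      _ = ((3:ℝ)^(n:ℕ)) * (g n : ℝ) := by push_cast; ring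
    calc (f n : ℝ) ^ (1 / (n:ℝ)) ≤ (((3:ℝ)^(n:ℕ)) * (g n : ℝ)) ^ (1 / (n:ℝ)) :=
        Real.rpow_le_rpow (Nat.cast_nonneg _) h1 (by positivity)
    _ = (((3:ℝ)^(n:ℕ)) ^ (1 / (n:ℝ))) * ((g n : ℝ) ^ (1 / (n:ℝ))) :=
        Real.mul_rpow (by positivity) (Nat.cast_nonneg _)
    _ = 3 * ((g n : ℝ) ^ (1 / (n:ℝ))) := by rw [rpow_pow_root 3 (by norm_num) hn]
    _ ≤ 3 * b := by linarith [hbn]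
  have h3 : sInf SF / 3 ≤ sInf SG := by
    apply le_csInf hSGne
    intro b hb
    have := key b hb
    linarith
  linarith [h3]

end Glue

/-- `|S̃//ₙ(τ)| ≤ 3ⁿ·|Sₙ(τ)|` for all `n ≥ 1`, and consequently
`limsup |S̃//ₙ(τ)|^{1/n} ≤ 3·limsup |Sₙ(τ)|^{1/n}`. -/
theorem stmt0 {k : ℕ} (hk : 1 ≤ k) (τ : Equiv.Perm (Fin k)) :
    (∀ n : ℕ, 1 ≤ n →
      Nat.card {σ : ℤ → ℤ // IsBoundedAffinePerm n σ ∧ ¬ AffContains σ τ} ≤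
        3 ^ n * Nat.card {π : Equiv.Perm (Fin n) // ¬ PermContains π τ}) ∧
    Filter.limsup (fun n : ℕ =>
        (Nat.card {σ : ℤ → ℤ // IsBoundedAffinePerm n σ ∧ ¬ AffContains σ τ} : ℝ)
          ^ (1 / (n : ℝ))) Filter.atTop ≤
      3 * Filter.limsup (fun n : ℕ =>
        (Nat.card {π : Equiv.Perm (Fin n) // ¬ PermContains π τ} : ℝ)
          ^ (1 / (n : ℝ))) Filter.atTop := by
  constructor
  · intro n hn
    exact AffInj.affine_card_bound hn τ
  · obtain ⟨K, hK, hgK⟩ := MT.g_bound τ hk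
    exact Glue.limsup_glue _ _ K hK (fun n hn => AffInj.affine_card_bound hn τ) hgK
end

section
/- Let C be a sum closed permutation class. For every n ≥ 1, the number of affine permutations of size n belonging to aff(C) equals ∑_{π ∈ C_n} a(π), where the sum is over all permutations of size n in C. -/
namespace AffAux

def IsPer (n : ℕ) (σ : ℤ → ℤ) : Prop := ∀ i : ℤ, σ (i + (n : ℤ)) = σ i + n

def IsCut (σ : ℤ → ℤ) (r : ℤ) : Prop := ∀ i : ℤ, σ i ≤ r ↔ i ≤ r

variable {n : ℕ}

lemma IsPer.add_mul {σ : ℤ → ℤ} (h : IsPer n σ) (i : ℤ) :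
    ∀ k : ℤ, σ (i + k * n) = σ i + k * n := by
  intro k
  induction k using Int.induction_on with
  | zero => simp
  | succ k ih =>
      have h2 := h (i + (k : ℤ) * n)
      have e : i + ((k : ℤ) + 1) * n = (i + (k : ℤ) * n) + n := by ring
      rw [e, h2, ih]; ring
  | pred k ih =>
      have h2 := h (i + (-(k : ℤ) - 1) * n)
      have e : i + (-(k : ℤ) - 1) * n + (n : ℤ) = i + (-(k : ℤ)) * n := by ring
      rw [e, ih] at h2
      linarith

lemma IsPer.shift {σ : ℤ → ℤ} (h : IsPer n σ) (r : ℤ) : IsPer n (shiftPerm r σ) := by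
  intro i
  simp only [shiftPerm]
  rw [show i + (n : ℤ) - r = (i - r) + n by ring, h]
  ring

lemma per_ext {σ τ : ℤ → ℤ} (hn : 0 < n) (hσ : IsPer n σ) (hτ : IsPer n τ) (r : ℤ)
    (h : ∀ i : ℤ, r + 1 ≤ i → i ≤ r + n → σ i = τ i) : σ = τ := by
  funext i
  have hn' : (0 : ℤ) < n := by exact_mod_cast hn
  set k := (i - r - 1) / (n : ℤ) with hk
  set m := (i - r - 1) % (n : ℤ) with hm
  have hdiv : m + (n : ℤ) * k = i - r - 1 := Int.emod_add_mul_ediv (i - r - 1) n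
  have h0 : 0 ≤ m := Int.emod_nonneg _ hn'.ne'
  have h2 : m < n := Int.emod_lt_of_pos _ hn'
  have e : i = (i - k * n) + k * n := by ring
  have e2 : i - k * n = r + 1 + m := by rw [mul_comm]; linarith
  have h1 : r + 1 ≤ i - k * n := by omega
  have h3 : i - k * n ≤ r + n := by omega
  calc σ i = σ ((i - k * n) + k * n) := by rw [← e]
    _ = σ (i - k * n) + k * n := hσ.add_mul _ _
    _ = τ (i - k * n) + k * n := by rw [h _ h1 h3]
    _ = τ ((i - k * n) + k * n) := (hτ.add_mul _ _).symm
    _ = τ i := by rw [← e]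

lemma infiniteSum_eq (hn : 0 < n) (π : Equiv.Perm (Fin n)) {i q : ℤ} {t : Fin n}
    (hiq : i = q * n + (t : ℤ) + 1) : infiniteSum hn π i = (π t : ℤ) + 1 + n * q := by
  subst hiq
  have hn' : (0 : ℤ) < n := by exact_mod_cast hn
  have ht : (0 : ℤ) ≤ (t : ℤ) := Int.natCast_nonneg _
  have ht2 : (t : ℤ) < n := by exact_mod_cast t.isLt
  have e1 : (q * (n : ℤ) + (t : ℤ) + 1 - 1) % n = (t : ℤ) := by
    rw [show q * (n : ℤ) + (t : ℤ) + 1 - 1 = (t : ℤ) + q * n by ring,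
      Int.add_mul_emod_self_right, Int.emod_eq_of_lt ht ht2]
  have e2 : (q * (n : ℤ) + (t : ℤ) + 1 - 1) / n = q := by
    rw [show q * (n : ℤ) + (t : ℤ) + 1 - 1 = (t : ℤ) + q * n by ring,
      Int.add_mul_ediv_right _ _ hn'.ne', Int.ediv_eq_zero_of_lt ht ht2]
    ring
  have efin : (⟨((q * (n : ℤ) + (t : ℤ) + 1 - 1) % (n : ℤ)).toNat, by
      have h1 : 0 ≤ (q * (n : ℤ) + (t : ℤ) + 1 - 1) % (n : ℤ) := Int.emod_nonneg _ hn'.ne'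
      have h2 : (q * (n : ℤ) + (t : ℤ) + 1 - 1) % (n : ℤ) < (n : ℤ) :=
        Int.emod_lt_of_pos _ hn'
      omega⟩ : Fin n) = t := by
    apply Fin.ext
    show ((q * (n : ℤ) + (t : ℤ) + 1 - 1) % (n : ℤ)).toNat = (t : ℕ)
    rw [e1, Int.toNat_natCast]
  show ((π _ : Fin n).val : ℤ) + 1 + (n : ℤ) * _ = _
  rw [e2]
  congr 2
  exact congrArg (fun x => ((π x : Fin n).val : ℤ)) efin

lemma exists_block (hn : 0 < n) (i : ℤ) : ∃ (q : ℤ) (t : Fin n), i = q * n + (t : ℤ) + 1 := by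
  have hn' : (0 : ℤ) < n := by exact_mod_cast hn
  have h0 := Int.emod_nonneg (i - 1) hn'.ne'
  have h2 := Int.emod_lt_of_pos (i - 1) hn'
  refine ⟨(i - 1) / n, ⟨((i - 1) % n).toNat, by omega⟩, ?_⟩
  have hdiv : (i - 1) % n + (n : ℤ) * ((i - 1) / n) = i - 1 := Int.emod_add_mul_ediv (i - 1) n
  simp only [Fin.val_mk]
  rw [Int.toNat_of_nonneg h0]
  linarith [mul_comm ((i - 1) / (n : ℤ)) (n : ℤ)]

lemma infiniteSum_per (hn : 0 < n) (π : Equiv.Perm (Fin n)) : IsPer n (infiniteSum hn π) := by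
  intro i
  obtain ⟨q, t, rfl⟩ := exists_block hn i
  rw [infiniteSum_eq hn π (q := q + 1) (t := t) (by ring), infiniteSum_eq hn π rfl]
  ring

lemma infiniteSum_bij (hn : 0 < n) (π : Equiv.Perm (Fin n)) :
    Function.Bijective (infiniteSum hn π) := by
  constructor
  · intro i j hij
    obtain ⟨q, t, rfl⟩ := exists_block hn i
    obtain ⟨q', t', rfl⟩ := exists_block hn j
    rw [infiniteSum_eq hn π rfl, infiniteSum_eq hn π rfl] at hij
    have h1 : ((π t : ℕ) : ℤ) < n := by exact_mod_cast (π t).isLt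
    have h2 : ((π t' : ℕ) : ℤ) < n := by exact_mod_cast (π t').isLt
    have h3 : (0 : ℤ) ≤ (π t : ℕ) := Int.natCast_nonneg _
    have h4 : (0 : ℤ) ≤ (π t' : ℕ) := Int.natCast_nonneg _
    have hq : q = q' := by
      rcases lt_trichotomy q q' with h | h | h
      · nlinarith
      · exact h
      · nlinarith
    subst hq
    have : (π t : ℤ) = (π t' : ℤ) := by linarith
    have htt : π t = π t' := by
      apply Fin.ext; exact_mod_cast this
    have : t = t' := π.injective htt
    rw [this]
  · intro v
    obtain ⟨q, s, hv⟩ := exists_block hn v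
    exact ⟨q * n + (π.symm s : ℤ) + 1, by
      rw [infiniteSum_eq hn π rfl, Equiv.apply_symm_apply, hv]; ring⟩

lemma isCut_shiftPerm_iff (σ : ℤ → ℤ) (s r : ℤ) :
    IsCut (shiftPerm s σ) r ↔ IsCut σ (r - s) := by
  constructor
  · intro h i
    have h2 := h (i + s)
    simp only [shiftPerm, add_sub_cancel_right] at h2
    omega
  · intro h i
    have h2 := h (i - s)
    simp only [shiftPerm]
    omega

lemma IsCut.shift_period {σ : ℤ → ℤ} (hper : IsPer n σ) {r : ℤ} (hc : IsCut σ r) (k : ℤ) :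
    IsCut σ (r + k * n) := by
  intro i
  have h1 : σ i = σ (i - k * n) + k * n := by
    have := hper.add_mul (i - k * n) k
    rw [show i - k * n + k * n = i by ring] at this
    omega
  have h2 := hc (i - k * n)
  omega

lemma infiniteSum_cut_zero (hn : 0 < n) (π : Equiv.Perm (Fin n)) :
    IsCut (infiniteSum hn π) 0 := by
  intro i
  obtain ⟨q, t, rfl⟩ := exists_block hn i
  rw [infiniteSum_eq hn π rfl]
  have h1 : ((π t : ℕ) : ℤ) < n := by exact_mod_cast (π t).isLt
  have h3 : (0 : ℤ) ≤ (π t : ℕ) := Int.natCast_nonneg _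
  have h4 : (0 : ℤ) ≤ (t : ℤ) := Int.natCast_nonneg _
  have h5 : ((t : ℕ) : ℤ) < n := by exact_mod_cast t.isLt
  have hn' : (0 : ℤ) < n := by exact_mod_cast hn
  have key : ∀ x : ℤ, 0 ≤ x → x < n → (q * n + x + 1 ≤ 0 ↔ q ≤ -1) := by
    intro x hx hxn
    constructor
    · intro h
      by_contra hq
      push_neg at hq
      have h0 : 0 ≤ q := by omega
      have : 0 ≤ q * (n : ℤ) := mul_nonneg h0 hn'.le
      omega
    · intro h
      have : q * (n : ℤ) ≤ (-1) * n := mul_le_mul_of_nonneg_right h hn'.le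
      omega
  have k1 := key ((π t : ℕ) : ℤ) h3 h1
  have k2 := key ((t : ℕ) : ℤ) h4 h5
  constructor
  · intro h
    have := k2.mpr (k1.mp (by linarith))
    linarith
  · intro h
    have := k1.mpr (k2.mp (by linarith))
    linarith

lemma infiniteSum_cut_iff (hn : 0 < n) (π : Equiv.Perm (Fin n)) {c : ℤ}
    (hc0 : 0 ≤ c) (hcn : c < n) :
    IsCut (infiniteSum hn π) c ↔ IsPrefixInvariant π c.toNat := by
  have hn' : (0 : ℤ) < n := by exact_mod_cast hn
  constructor
  · intro h i
    have h2 := h ((i : ℤ) + 1)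
    rw [infiniteSum_eq hn π (q := 0) (t := i) (by ring)] at h2
    have h1 : ((π i : ℕ) : ℤ) < n := by exact_mod_cast (π i).isLt
    have h3 : (0 : ℤ) ≤ (π i : ℕ) := Int.natCast_nonneg _
    constructor
    · intro hlt
      have : ((π i : ℕ) : ℤ) < c := by omega
      have h4 : ((π i : ℕ) : ℤ) + 1 + (n : ℤ) * 0 ≤ c := by omega
      have := h2.mp h4
      omega
    · intro hlt
      have : ((i : ℕ) : ℤ) < c := by omega
      have := h2.mpr (by omega)
      omega
  · intro h i
    obtain ⟨q, t, rfl⟩ := exists_block hn i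
    rw [infiniteSum_eq hn π rfl]
    have h2 := h t
    have h1 : ((π t : ℕ) : ℤ) < n := by exact_mod_cast (π t).isLt
    have h3 : (0 : ℤ) ≤ (π t : ℕ) := Int.natCast_nonneg _
    have h4 : (0 : ℤ) ≤ (t : ℤ) := Int.natCast_nonneg _
    have h5 : ((t : ℕ) : ℤ) < n := by exact_mod_cast t.isLt
    have h6 : ((π t : ℕ) : ℤ) < c ↔ ((t : ℕ) : ℤ) < c := by
      rw [show ((π t : ℕ) : ℤ) < c ↔ (π t : ℕ) < c.toNat by omega,
        show ((t : ℕ) : ℤ) < c ↔ (t : ℕ) < c.toNat by omega]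
      exact h2
    rcases lt_trichotomy q 0 with hq | hq | hq
    · have : q ≤ -1 := by omega
      constructor
      · intro _; nlinarith
      · intro _; nlinarith
    · subst hq; constructor
      · intro hh; have : ((π t : ℕ) : ℤ) < c := by omega
        have := h6.mp this; omega
      · intro hh; have : ((t : ℕ) : ℤ) < c := by omega
        have := h6.mpr this; omega
    · have : 1 ≤ q := hq
      constructor
      · intro hh; nlinarith
      · intro hh; nlinarith

open Finset in
lemma window_step {σ : ℤ → ℤ} (hper : IsPer n σ) (hn : 0 < n) (a : ℤ) :
    ∑ i ∈ Finset.Icc (a + 2) (a + 1 + (n : ℤ)), σ i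
      = (∑ i ∈ Finset.Icc (a + 1) (a + (n : ℤ)), σ i) + n := by
  have hn' : (0 : ℤ) < n := by exact_mod_cast hn
  have e1 : Finset.Icc (a + 1) (a + (n : ℤ)) = insert (a + 1) (Finset.Icc (a + 2) (a + (n : ℤ))) := by
    ext x; simp only [Finset.mem_Icc, Finset.mem_insert]; omega
  have e2 : Finset.Icc (a + 2) (a + 1 + (n : ℤ))
      = insert (a + 1 + n) (Finset.Icc (a + 2) (a + (n : ℤ))) := by
    ext x; simp only [Finset.mem_Icc, Finset.mem_insert]; omega
  rw [e1, e2, Finset.sum_insert (by simp only [Finset.mem_Icc]; omega),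
    Finset.sum_insert (by simp only [Finset.mem_Icc]; omega)]
  have h3 := hper (a + 1)
  rw [show a + 1 + (n : ℤ) = (a + 1) + n by ring, h3]
  ring

lemma window_sum {σ : ℤ → ℤ} (hper : IsPer n σ) (hn : 0 < n) (a : ℤ) :
    ∑ i ∈ Finset.Icc (a + 1) (a + (n : ℤ)), σ i
      = (∑ i ∈ Finset.Icc (1 : ℤ) (n : ℤ), σ i) + n * a := by
  induction a using Int.induction_on with
  | zero => simp
  | succ k ih =>
      have := window_step hper hn (k : ℤ)
      rw [show ((k : ℤ) + 1) + 1 = (k : ℤ) + 2 by ring, this, ih]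
      ring
  | pred k ih =>
      have := window_step hper hn (-(k : ℤ) - 1)
      rw [show (-(k : ℤ) - 1) + 2 = (-(k : ℤ)) + 1 by ring,
        show (-(k : ℤ) - 1) + 1 + (n : ℤ) = (-(k : ℤ)) + n by ring] at this
      have e : (n : ℤ) * (-(k : ℤ) - 1) = n * (-(k : ℤ)) - n := by ring
      linarith

lemma sum_Icc_eq_sum_fin (n : ℕ) (f : ℤ → ℤ) :
    ∑ i ∈ Finset.Icc (1 : ℤ) (n : ℤ), f i = ∑ t : Fin n, f ((t : ℤ) + 1) := by
  refine Finset.sum_bij' (fun a ha => (⟨(a - 1).toNat, by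
      simp only [Finset.mem_Icc] at ha; omega⟩ : Fin n))
    (fun t _ => (t : ℤ) + 1) (fun a ha => Finset.mem_univ _) ?_ ?_ ?_ ?_
  · intro t _
    simp only [Finset.mem_Icc]
    have := t.isLt
    constructor
    · omega
    · exact_mod_cast t.isLt
  · intro a ha
    simp only [Finset.mem_Icc] at ha
    show ((a - 1).toNat : ℤ) + 1 = a
    omega
  · intro t _
    apply Fin.ext
    show ((t : ℤ) + 1 - 1).toNat = (t : ℕ)
    omega
  · intro a ha
    simp only [Finset.mem_Icc] at ha
    congr 1
    show a = ((a - 1).toNat : ℤ) + 1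
    omega

lemma sum_infiniteSum_base (hn : 0 < n) (π : Equiv.Perm (Fin n)) :
    ∑ i ∈ Finset.Icc (1 : ℤ) (n : ℤ), infiniteSum hn π i
      = ∑ i ∈ Finset.Icc (1 : ℤ) (n : ℤ), i := by
  rw [sum_Icc_eq_sum_fin n, sum_Icc_eq_sum_fin n]
  have e : ∀ t : Fin n, infiniteSum hn π ((t : ℤ) + 1) = ((π t : ℕ) : ℤ) + 1 := by
    intro t
    rw [infiniteSum_eq hn π (q := 0) (t := t) (by ring)]
    ring
  rw [Finset.sum_congr rfl (fun t _ => e t)]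
  exact Equiv.sum_comp π (fun t : Fin n => ((t : ℕ) : ℤ) + 1)



section ToPerm
variable (hn : 0 < n) (σ : ℤ → ℤ) (r : ℤ)

lemma window_bounds (hper : IsPer n σ) (hcut : IsCut σ r) {i : ℤ}
    (h1 : r + 1 ≤ i) (h2 : i ≤ r + n) : r + 1 ≤ σ i ∧ σ i ≤ r + n := by
  have hc2 : IsCut σ (r + 1 * n) := hcut.shift_period hper 1
  have ha := (hcut i).not
  have hb := hc2 i
  constructor
  · omega
  · rw [one_mul] at hb; omega

noncomputable def toPerm (hbij : Function.Bijective σ) (hper : IsPer n σ) (hcut : IsCut σ r) :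
    Equiv.Perm (Fin n) :=
  Equiv.ofBijective (fun j : Fin n => (⟨(σ (r + 1 + (j : ℤ)) - (r + 1)).toNat, by
    have hj : (0 : ℤ) ≤ (j : ℤ) := Int.natCast_nonneg _
    have hj2 : ((j : ℕ) : ℤ) < n := by exact_mod_cast j.isLt
    have := window_bounds σ r hper hcut (i := r + 1 + (j : ℤ)) (by omega) (by omega)
    omega⟩ : Fin n))
    (by
      rw [← Finite.injective_iff_bijective]
      intro a b hab
      simp only [Fin.mk.injEq] at hab
      have ha : (0 : ℤ) ≤ (a : ℤ) := Int.natCast_nonneg _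
      have ha2 : ((a : ℕ) : ℤ) < n := by exact_mod_cast a.isLt
      have hb : (0 : ℤ) ≤ (b : ℤ) := Int.natCast_nonneg _
      have hb2 : ((b : ℕ) : ℤ) < n := by exact_mod_cast b.isLt
      have wa := window_bounds σ r hper hcut (i := r + 1 + (a : ℤ)) (by omega) (by omega)
      have wb := window_bounds σ r hper hcut (i := r + 1 + (b : ℤ)) (by omega) (by omega)
      have : σ (r + 1 + (a : ℤ)) = σ (r + 1 + (b : ℤ)) := by omega
      have := hbij.injective this
      apply Fin.ext
      omega)

lemma toPerm_spec (hbij : Function.Bijective σ) (hper : IsPer n σ) (hcut : IsCut σ r)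
    (j : Fin n) : ((toPerm σ r hbij hper hcut j : ℕ) : ℤ) = σ (r + 1 + (j : ℤ)) - (r + 1) := by
  have hj : (0 : ℤ) ≤ (j : ℤ) := Int.natCast_nonneg _
  have hj2 : ((j : ℕ) : ℤ) < n := by exact_mod_cast j.isLt
  have := window_bounds σ r hper hcut (i := r + 1 + (j : ℤ)) (by omega) (by omega)
  show (((⟨(σ (r + 1 + (j : ℤ)) - (r + 1)).toNat, _⟩ : Fin n) : ℕ) : ℤ) = _
  simp only [Fin.val_mk]
  omega

lemma toPerm_eq (hbij : Function.Bijective σ) (hper : IsPer n σ) (hcut : IsCut σ r) :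
    σ = shiftPerm r (infiniteSum hn (toPerm σ r hbij hper hcut)) := by
  set π := toPerm σ r hbij hper hcut with hπ
  apply per_ext hn hper ((infiniteSum_per hn π).shift r) r
  intro i h1 h2
  set j : Fin n := ⟨(i - r - 1).toNat, by omega⟩ with hj
  have hij : i = r + 1 + (j : ℤ) := by
    simp only [hj, Fin.val_mk]
    omega
  have hval := toPerm_spec σ r hbij hper hcut j
  rw [← hπ] at hval
  show σ i = infiniteSum hn π (i - r) + r
  rw [infiniteSum_eq hn π (q := 0) (t := j) (by omega), hij]
  omega

end ToPerm


lemma permDirectSum_val_left {a b : ℕ} (σ : Equiv.Perm (Fin a)) (ρ : Equiv.Perm (Fin b))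
    {i : Fin (a + b)} {j : Fin a} (hj : (j : ℕ) = (i : ℕ)) :
    ((permDirectSum σ ρ) i : ℕ) = (σ j : ℕ) := by
  have hi : i = Fin.castAdd b j := Fin.ext hj.symm
  subst hi
  simp [permDirectSum, Equiv.sumCongr_apply]

lemma permDirectSum_val_right {a b : ℕ} (σ : Equiv.Perm (Fin a)) (ρ : Equiv.Perm (Fin b))
    {i : Fin (a + b)} {j : Fin b} (hj : (i : ℕ) = a + (j : ℕ)) :
    ((permDirectSum σ ρ) i : ℕ) = a + (ρ j : ℕ) := by
  have hi : i = Fin.natAdd a j := Fin.ext hj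
  subst hi
  simp [permDirectSum, Equiv.sumCongr_apply]

variable {m : ℕ}

def sumIter (ρ : Equiv.Perm (Fin m)) : (N : ℕ) → Equiv.Perm (Fin (m * N))
  | 0 => Equiv.refl _
  | N + 1 => permDirectSum (sumIter ρ N) ρ

lemma emptyPerm_mem {C : (n : ℕ) → Set (Equiv.Perm (Fin n))} (hclass : IsPermClass C)
    {ρ : Equiv.Perm (Fin m)} (hρ : ρ ∈ C m) (τ : Equiv.Perm (Fin 0)) : τ ∈ C 0 :=
  hclass m 0 ρ τ hρ ⟨Fin.elim0, fun s => s.elim0, fun s => s.elim0⟩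

lemma sumIter_mem {C : (n : ℕ) → Set (Equiv.Perm (Fin n))} (hclass : IsPermClass C)
    (hsum : IsSumClosed C) {ρ : Equiv.Perm (Fin m)} (hρ : ρ ∈ C m) :
    ∀ N : ℕ, sumIter ρ N ∈ C (m * N)
  | 0 => emptyPerm_mem hclass hρ _
  | N + 1 => hsum (m * N) m (sumIter ρ N) ρ (sumIter_mem hclass hsum hρ N) hρ

lemma sumIter_val (hm : 0 < m) (ρ : Equiv.Perm (Fin m)) :
    ∀ (N : ℕ) (j : Fin (m * N)),
      ((sumIter ρ N j : ℕ) : ℤ) = infiniteSum hm ρ ((j : ℤ) + 1) - 1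
  | 0, j => j.elim0
  | N + 1, j => by
      have hlt : (j : ℕ) < m * N + m := by simpa [Nat.mul_succ] using j.isLt
      have e0 : ((sumIter ρ (N + 1) j : ℕ))
          = ((permDirectSum (sumIter ρ N) ρ ⟨(j : ℕ), hlt⟩ : ℕ)) := rfl
      rw [e0]
      by_cases h : (j : ℕ) < m * N
      · rw [permDirectSum_val_left (sumIter ρ N) ρ (i := ⟨(j : ℕ), hlt⟩) (j := ⟨(j : ℕ), h⟩) rfl]
        have := sumIter_val hm ρ N ⟨(j : ℕ), h⟩
        simpa using this
      · push_neg at h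
        have hM : ((m * N : ℕ) : ℤ) = (N : ℤ) * m := by push_cast; ring
        set t : Fin m := ⟨(j : ℕ) - m * N, by omega⟩ with ht
        rw [permDirectSum_val_right (sumIter ρ N) ρ (i := ⟨(j : ℕ), hlt⟩) (j := t)
          (by simp only [ht, Fin.val_mk]; omega)]
        have hj1 : (j : ℤ) + 1 = (N : ℤ) * m + (t : ℤ) + 1 := by
          simp only [ht, Fin.val_mk]
          omega
        rw [infiniteSum_eq hm ρ hj1]
        push_cast
        have hρt : (ρ t : ℕ) < m := (ρ t).isLt
        have hcomm : ((m : ℤ)) * N = (N : ℤ) * m := by ring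
        omega

/-- Main containment lemma: a window pattern of a shifted infinite sum lies in the class. -/
lemma window_pattern_mem {C : (n : ℕ) → Set (Equiv.Perm (Fin n))}
    (hclass : IsPermClass C) (hsum : IsSumClosed C)
    {m : ℕ} (hm : 0 < m) {ρ : Equiv.Perm (Fin m)} (hρ : ρ ∈ C m)
    {σ : ℤ → ℤ} {s : ℤ} (hσ : σ = shiftPerm s (infiniteSum hm ρ))
    (hn : 0 < n) (r : ℤ) (τ : Equiv.Perm (Fin n))
    (hτ : ∀ j j' : Fin n, τ j < τ j' ↔ σ (r + 1 + (j : ℤ)) < σ (r + 1 + (j' : ℤ))) :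
    τ ∈ C n := by
  have hm' : (0 : ℤ) < m := by exact_mod_cast hm
  set b : ℤ := r + 1 - s with hb
  set k : ℕ := (1 - b).toNat with hk
  set L : ℤ := b + (k : ℤ) * m with hL
  have hk1 : (1 : ℤ) - b ≤ (k : ℤ) := Int.self_le_toNat _
  have hkm : (k : ℤ) ≤ (k : ℤ) * m := le_mul_of_one_le_right (Int.natCast_nonneg _) (by omega)
  have hL1 : 1 ≤ L := by omega
  set N : ℕ := (L + n - 1).toNat with hN
  have hNval : (N : ℤ) = L + n - 1 := Int.toNat_of_nonneg (by omega)
  have hNm : (N : ℤ) ≤ (N : ℤ) * m := le_mul_of_one_le_right (Int.natCast_nonneg _) (by omega)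
  have hmN : (L + (n : ℤ) - 1) ≤ (m : ℤ) * N := by rw [mul_comm]; omega
  -- the embedding
  have hfbound : ∀ j : Fin n, (L - 1 + (j : ℤ)).toNat < m * N := by
    intro j
    have hj2 : ((j : ℕ) : ℤ) < n := by exact_mod_cast j.isLt
    have : ((m * N : ℕ) : ℤ) = (m : ℤ) * N := by push_cast; ring
    omega
  set f : Fin n → Fin (m * N) := fun j => ⟨(L - 1 + (j : ℤ)).toNat, hfbound j⟩ with hf
  -- value computation
  have hval : ∀ j : Fin n, ((sumIter ρ N (f j) : ℕ) : ℤ) = σ (r + 1 + (j : ℤ)) - s + k * m - 1 := by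
    intro j
    have hj : (0 : ℤ) ≤ (j : ℤ) := Int.natCast_nonneg _
    rw [sumIter_val hm ρ N (f j)]
    have hfj : ((f j : ℕ) : ℤ) = L - 1 + (j : ℤ) := by
      simp only [hf, Fin.val_mk]
      omega
    rw [hfj]
    have e1 : L - 1 + (j : ℤ) + 1 = (b + (j : ℤ)) + (k : ℤ) * m := by omega
    rw [e1, (infiniteSum_per hm ρ).add_mul (b + (j : ℤ)) (k : ℤ)]
    have e2 : σ (r + 1 + (j : ℤ)) = infiniteSum hm ρ (b + (j : ℤ)) + s := by
      rw [hσ]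
      show infiniteSum hm ρ (r + 1 + (j : ℤ) - s) + s = _
      congr 2
      omega
    omega
  -- conclude
  apply hclass (m * N) n (sumIter ρ N) τ (sumIter_mem hclass hsum hρ N)
  refine ⟨f, ?_, ?_⟩
  · intro j j' hjj
    have hj : (0 : ℤ) ≤ (j : ℤ) := Int.natCast_nonneg _
    have hjj' : ((j : ℕ) : ℤ) < (j' : ℕ) := by exact_mod_cast hjj
    show (f j : ℕ) < (f j' : ℕ)
    simp only [hf, Fin.val_mk]
    omega
  · intro j j'
    rw [hτ j j']
    have h1 := hval j
    have h2 := hval j'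
    constructor
    · intro h
      show (sumIter ρ N (f j) : ℕ) < (sumIter ρ N (f j') : ℕ)
      omega
    · intro h
      have : (sumIter ρ N (f j) : ℕ) < (sumIter ρ N (f j') : ℕ) := h
      omega



lemma cut_shift_self {σ0 : ℤ → ℤ} (h : IsCut σ0 0) (r : ℤ) : IsCut (shiftPerm r σ0) r := by
  rw [isCut_shiftPerm_iff, sub_self]
  exact h

lemma shiftPerm_bijective {σ0 : ℤ → ℤ} (h : Function.Bijective σ0) (r : ℤ) :
    Function.Bijective (shiftPerm r σ0) := by
  constructor
  · intro x y hxy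
    simp only [shiftPerm, add_left_inj] at hxy
    have := h.injective hxy
    omega
  · intro v
    obtain ⟨u, hu⟩ := h.surjective (v - r)
    refine ⟨u + r, ?_⟩
    simp only [shiftPerm, add_sub_cancel_right, hu]
    ring

lemma sum_shift_reindex (f : ℤ → ℤ) (a b c : ℤ) :
    ∑ i ∈ Finset.Icc a b, f (i - c) = ∑ j ∈ Finset.Icc (a - c) (b - c), f j := by
  refine Finset.sum_bij' (fun x _ => x - c) (fun x _ => x + c) ?_ ?_ ?_ ?_ (fun x _ => rfl) <;>
    (intro x hx
     first
     | (simp only [Finset.mem_Icc] at hx ⊢; omega)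
     | (simp only [Finset.mem_Icc] at hx; dsimp only; omega))

lemma shift_infiniteSum_sum {n : ℕ} (hn : 0 < n) (π : Equiv.Perm (Fin n)) (r : ℤ) :
    ∑ i ∈ Finset.Icc (1 : ℤ) (n : ℤ), shiftPerm r (infiniteSum hn π) i
      = ∑ i ∈ Finset.Icc (1 : ℤ) (n : ℤ), i := by
  have hcard : (Finset.Icc (1 : ℤ) (n : ℤ)).card = n := by
    rw [Int.card_Icc]
    omega
  have h1 : ∑ i ∈ Finset.Icc (1 : ℤ) (n : ℤ), shiftPerm r (infiniteSum hn π) i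
      = (∑ i ∈ Finset.Icc (1 : ℤ) (n : ℤ), infiniteSum hn π (i - r)) + (n : ℤ) * r := by
    simp only [shiftPerm]
    rw [Finset.sum_add_distrib, Finset.sum_const, hcard, nsmul_eq_mul]
  rw [h1, sum_shift_reindex (infiniteSum hn π) 1 (n : ℤ) r]
  have w := window_sum (infiniteSum_per hn π) hn (-r)
  rw [sum_infiniteSum_base hn π] at w
  rw [show (1 : ℤ) - r = -r + 1 by ring, show (n : ℤ) - r = -r + n by ring, w]
  ring

lemma shift_infiniteSum_isAffine {n : ℕ} (hn : 0 < n) (π : Equiv.Perm (Fin n)) (r : ℤ) :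
    IsAffinePerm n (shiftPerm r (infiniteSum hn π)) :=
  ⟨shiftPerm_bijective (infiniteSum_bij hn π) r, (infiniteSum_per hn π).shift r,
    shift_infiniteSum_sum hn π r⟩

lemma cut_lt_first {n : ℕ} (hn : 0 < n) (π : Equiv.Perm (Fin n)) {r c : ℤ}
    (hr0 : 0 ≤ r)
    (hd : (n : ℤ) - r ≤ (firstBlockSize π : ℤ))
    (hc : IsCut (shiftPerm r (infiniteSum hn π)) c) (h1 : r < c) (h2 : c ≤ (n : ℤ) - 1) :
    False := by
  have hcut : IsCut (infiniteSum hn π) (c - r) := (isCut_shiftPerm_iff _ _ _).mp hc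
  have hpi : IsPrefixInvariant π (c - r).toNat :=
    (infiniteSum_cut_iff hn π (by omega) (by omega)).mp hcut
  have hmem : (c - r).toNat ∈ {d : ℕ | 1 ≤ d ∧ d ≤ n ∧ IsPrefixInvariant π d} :=
    ⟨by omega, by omega, hpi⟩
  have hle : firstBlockSize π ≤ (c - r).toNat := Nat.sInf_le hmem
  omega

end AffAux

/-- for a sum closed permutation class `C` and `n ≥ 1`,
`|aff(C)ₙ| = ∑_{π ∈ Cₙ} a(π)`. -/
theorem stmt1 (C : (n : ℕ) → Set (Equiv.Perm (Fin n)))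
    (hclass : IsPermClass C) (hsum : IsSumClosed C) (n : ℕ) (hn : 1 ≤ n) :
    Nat.card {σ : ℤ → ℤ // IsAffinePerm n σ ∧ σ ∈ AffOfClass C} =
      ∑ π ∈ (Set.toFinite (C n)).toFinset, firstBlockSize π := by
  classical
  have hn0 : 0 < n := hn
  have hnZ : (0 : ℤ) < (n : ℤ) := by exact_mod_cast hn0
  have hfbsSet : ∀ π : Equiv.Perm (Fin n),
      firstBlockSize π ∈ {d : ℕ | 1 ≤ d ∧ d ≤ n ∧ IsPrefixInvariant π d} := by
    intro π
    apply Nat.sInf_mem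
    exact ⟨n, hn, le_refl n, fun i => iff_of_true (π i).isLt i.isLt⟩
  set F := (Set.toFinite (C n)).toFinset with hF
  set D := F.sigma (fun π => Finset.Icc 1 (firstBlockSize π)) with hD
  have hrhs : ∑ π ∈ F, firstBlockSize π = D.card := by
    rw [hD, Finset.card_sigma]
    exact Finset.sum_congr rfl (fun π _ => by rw [Nat.card_Icc]; omega)
  have key : Nat.card ↥D = Nat.card {σ : ℤ → ℤ // IsAffinePerm n σ ∧ σ ∈ AffOfClass C} := by
    apply Nat.card_eq_of_bijective (fun p : ↥D =>
      (⟨shiftPerm ((n : ℤ) - (p.1.2 : ℤ)) (infiniteSum hn0 p.1.1),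
        AffAux.shift_infiniteSum_isAffine hn0 p.1.1 _,
        ⟨n, hn0, p.1.1, (n : ℤ) - (p.1.2 : ℤ), by
          have h := (Finset.mem_sigma.mp p.2).1
          rw [hF, Set.Finite.mem_toFinset] at h
          exact h, rfl⟩⟩ :
        {σ : ℤ → ℤ // IsAffinePerm n σ ∧ σ ∈ AffOfClass C}))
    constructor
    · rintro ⟨⟨π, d⟩, hp⟩ ⟨⟨π', d'⟩, hp'⟩ hpp
      have hv := congrArg Subtype.val hpp
      simp only at hv
      have hdmem : 1 ≤ d ∧ d ≤ firstBlockSize π := by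
        simpa using (Finset.mem_sigma.mp hp).2
      have hd'mem : 1 ≤ d' ∧ d' ≤ firstBlockSize π' := by
        simpa using (Finset.mem_sigma.mp hp').2
      obtain ⟨hd1, hd2⟩ := hdmem
      obtain ⟨hd'1, hd'2⟩ := hd'mem
      obtain ⟨ha1, ha2, -⟩ := hfbsSet π
      obtain ⟨hb1, hb2, -⟩ := hfbsSet π'
      have hdd : d = d' := by
        by_contra hne
        have hne' : (n : ℤ) - (d : ℤ) ≠ (n : ℤ) - (d' : ℤ) := by
          intro h; apply hne; omega
        rcases lt_or_gt_of_ne hne' with hlt | hlt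
        · have hcself : AffAux.IsCut (shiftPerm ((n : ℤ) - (d' : ℤ)) (infiniteSum hn0 π'))
              ((n : ℤ) - (d' : ℤ)) :=
            AffAux.cut_shift_self (AffAux.infiniteSum_cut_zero hn0 π') _
          rw [← hv] at hcself
          exact AffAux.cut_lt_first hn0 π (by omega) (by omega) hcself hlt (by omega)
        · have hcself : AffAux.IsCut (shiftPerm ((n : ℤ) - (d : ℤ)) (infiniteSum hn0 π))
              ((n : ℤ) - (d : ℤ)) :=
            AffAux.cut_shift_self (AffAux.infiniteSum_cut_zero hn0 π) _
          rw [hv] at hcself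
          exact AffAux.cut_lt_first hn0 π' (by omega) (by omega) hcself hlt (by omega)
      subst hdd
      have hππ : π = π' := by
        apply Equiv.ext
        intro j
        have h1 := congrFun hv ((n : ℤ) - (d : ℤ) + 1 + (j : ℤ))
        simp only [shiftPerm] at h1
        rw [AffAux.infiniteSum_eq hn0 π (q := 0) (t := j) (by ring),
          AffAux.infiniteSum_eq hn0 π' (q := 0) (t := j) (by ring)] at h1
        have : ((π j : ℕ) : ℤ) = ((π' j : ℕ) : ℤ) := by omega
        exact Fin.ext (by exact_mod_cast this)
      subst hππ
      exact Subtype.ext rfl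
    · rintro ⟨σ, hA, hM⟩
      obtain ⟨m, hm, ρ, s, hρC, hσ⟩ := hM
      have hbij : Function.Bijective σ := hA.1
      have hper : AffAux.IsPer n σ := hA.2.1
      have hcs : AffAux.IsCut σ s := by
        rw [hσ]
        exact AffAux.cut_shift_self (AffAux.infiniteSum_cut_zero hm ρ) s
      set K := (Finset.Icc (0 : ℤ) ((n : ℤ) - 1)).filter (fun c => AffAux.IsCut σ c) with hK
      have hmemK : ∀ c : ℤ, c ∈ K ↔ (0 ≤ c ∧ c ≤ (n : ℤ) - 1 ∧ AffAux.IsCut σ c) := by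
        intro c
        simp only [hK, Finset.mem_filter, Finset.mem_Icc]
        tauto
      have hKne : K.Nonempty := by
        refine ⟨s % (n : ℤ), (hmemK _).mpr ⟨Int.emod_nonneg s hnZ.ne',
          by have := Int.emod_lt_of_pos s hnZ; omega, ?_⟩⟩
        have h := hcs.shift_period hper (-(s / (n : ℤ)))
        rw [show s + -(s / (n : ℤ)) * (n : ℤ) = s % (n : ℤ) by rw [Int.emod_def]; ring] at h
        exact h
      set r := K.max' hKne with hr
      have hrK := K.max'_mem hKne
      rw [hmemK] at hrK
      obtain ⟨hr0, hrn, hcr⟩ := hrK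
      set π := AffAux.toPerm σ r hbij hper hcr with hπ
      have hσπ : σ = shiftPerm r (infiniteSum hn0 π) := AffAux.toPerm_eq hn0 σ r hbij hper hcr
      have hspec := fun j : Fin n => AffAux.toPerm_spec σ r hbij hper hcr j
      have hπC : π ∈ C n := by
        apply AffAux.window_pattern_mem hclass hsum hm hρC hσ hn0 r π
        intro j j'
        have s1 := hspec j
        have s2 := hspec j'
        rw [← hπ] at s1 s2
        constructor
        · intro h
          have h2 : (π j : ℕ) < (π j' : ℕ) := h
          omega
        · intro h
          show (π j : ℕ) < (π j' : ℕ)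
          omega
      set d := ((n : ℤ) - r).toNat with hd
      have hdZ : (d : ℤ) = (n : ℤ) - r := Int.toNat_of_nonneg (by omega)
      have hd1 : 1 ≤ d := by omega
      have hdn : d ≤ n := by omega
      obtain ⟨hfb1, hfb2, hfbPI⟩ := hfbsSet π
      have hdle : d ≤ firstBlockSize π := by
        by_contra hlt
        push_neg at hlt
        have hcuta : AffAux.IsCut (infiniteSum hn0 π) ((firstBlockSize π : ℕ) : ℤ) := by
          apply (AffAux.infiniteSum_cut_iff hn0 π (c := ((firstBlockSize π : ℕ) : ℤ))
            (by omega) (by omega)).mpr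
          rw [Int.toNat_natCast]
          exact hfbPI
        have hcutc : AffAux.IsCut σ (r + (firstBlockSize π : ℤ)) := by
          rw [hσπ]
          apply (AffAux.isCut_shiftPerm_iff _ _ _).mpr
          rw [show r + ((firstBlockSize π : ℕ) : ℤ) - r = ((firstBlockSize π : ℕ) : ℤ) by ring]
          exact hcuta
        have hcK : r + ((firstBlockSize π : ℕ) : ℤ) ∈ K :=
          (hmemK _).mpr ⟨by omega, by omega, hcutc⟩
        have hle := K.le_max' _ hcK
        rw [← hr] at hle
        omega
      refine ⟨⟨⟨π, d⟩, ?_⟩, ?_⟩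
      · apply Finset.mem_sigma.mpr
        refine ⟨?_, Finset.mem_Icc.mpr ⟨hd1, hdle⟩⟩
        rw [hF]
        exact (Set.Finite.mem_toFinset _).mpr hπC
      · apply Subtype.ext
        show shiftPerm ((n : ℤ) - (d : ℤ)) (infiniteSum hn0 π) = σ
        rw [show (n : ℤ) - (d : ℤ) = r by omega, ← hσπ]
  rw [← key, Nat.card_eq_finsetCard, hrhs]
end

section
/- Let C be a sum closed permutation class, and set f_j = |C_j| (with f_0 = 1), g_j = |ind(C)_j|, and ˜f_n = |aff(C)_n|. Then for every n ≥ 1, ˜f_n = ∑_{k=1}^n k · g_k · f_{n−k}. -/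
namespace Stmt2Aux

open Equiv Function

/-- `σ` maps `(-∞, c]` onto itself. -/
def Cut (σ : ℤ → ℤ) (c : ℤ) : Prop := ∀ i : ℤ, σ i ≤ c ↔ i ≤ c

/-- The window function of `σ` on `(c, c+n]`, clamped to stay in `Fin n`. -/
def windowFun (σ : ℤ → ℤ) (c : ℤ) (n : ℕ) : Fin n → Fin n := fun j =>
  ⟨min (σ (c + 1 + (j : ℤ)) - (c + 1)).toNat (n - 1),
    Nat.lt_of_le_of_lt (Nat.min_le_right _ _) (by have := j.pos; omega)⟩

noncomputable def windowPerm (σ : ℤ → ℤ) (c : ℤ) (n : ℕ) : Equiv.Perm (Fin n) :=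
  if h : Function.Bijective (windowFun σ c n) then Equiv.ofBijective _ h else 1

theorem window_bounds {σ : ℤ → ℤ} {c : ℤ} {n : ℕ} (h1 : Cut σ c) (h2 : Cut σ (c + n))
    (j : Fin n) : c < σ (c + 1 + (j : ℤ)) ∧ σ (c + 1 + (j : ℤ)) ≤ c + n := by
  have hj : (j : ℤ) < n := by exact_mod_cast j.isLt
  have a1 : ¬ (σ (c + 1 + (j : ℤ)) ≤ c) := fun hh => by
    have := (h1 (c + 1 + (j : ℤ))).mp hh; omega
  have a2 : σ (c + 1 + (j : ℤ)) ≤ c + n := (h2 (c + 1 + (j : ℤ))).mpr (by omega)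
  omega

theorem windowFun_coe {σ : ℤ → ℤ} {c : ℤ} {n : ℕ} (h1 : Cut σ c) (h2 : Cut σ (c + n))
    (j : Fin n) : ((windowFun σ c n j : Fin n) : ℤ) = σ (c + 1 + (j : ℤ)) - (c + 1) := by
  obtain ⟨hl, hr⟩ := window_bounds h1 h2 j
  have hn : 0 < n := j.pos
  simp only [windowFun]
  omega

theorem windowFun_bijective {σ : ℤ → ℤ} {c : ℤ} {n : ℕ} (hinj : Function.Injective σ)
    (h1 : Cut σ c) (h2 : Cut σ (c + n)) : Function.Bijective (windowFun σ c n) := by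
  rw [← Finite.injective_iff_bijective]
  intro a b hab
  have ha := windowFun_coe h1 h2 a
  have hb := windowFun_coe h1 h2 b
  rw [hab] at ha
  have : σ (c + 1 + (a : ℤ)) = σ (c + 1 + (b : ℤ)) := by omega
  have := hinj this
  have : (a : ℤ) = (b : ℤ) := by omega
  exact Fin.ext (by exact_mod_cast this)

theorem windowPerm_coe {σ : ℤ → ℤ} {c : ℤ} {n : ℕ} (hinj : Function.Injective σ)
    (h1 : Cut σ c) (h2 : Cut σ (c + n)) (j : Fin n) :
    ((windowPerm σ c n j : Fin n) : ℤ) = σ (c + 1 + (j : ℤ)) - (c + 1) := by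
  rw [windowPerm, dif_pos (windowFun_bijective hinj h1 h2), Equiv.ofBijective_apply]
  exact windowFun_coe h1 h2 j

theorem infiniteSum_apply {n : ℕ} (hn : 0 < n) (π : Equiv.Perm (Fin n)) (j : Fin n) (q : ℤ) :
    infiniteSum hn π (1 + (j : ℤ) + n * q) = π j + 1 + n * q := by
  have h0 : (0 : ℤ) < n := by exact_mod_cast hn
  have hj : (j : ℤ) < n := by exact_mod_cast j.isLt
  have hj0 : (0 : ℤ) ≤ j := Int.natCast_nonneg _
  have hmod : ((1 + (j : ℤ) + n * q - 1) % (n : ℤ)) = (j : ℤ) := by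
    rw [show (1 + (j : ℤ) + n * q - 1) = (j : ℤ) + n * q by ring,
      Int.add_mul_emod_self_left]
    exact Int.emod_eq_of_lt hj0 hj
  have hdiv : ((1 + (j : ℤ) + n * q - 1) / (n : ℤ)) = q := by
    rw [show (1 + (j : ℤ) + n * q - 1) = (j : ℤ) + n * q by ring,
      Int.add_mul_ediv_left _ _ h0.ne', Int.ediv_eq_zero_of_lt hj0 hj, zero_add]
  have harg : ((1 + (j : ℤ) + n * q - 1) % (n : ℤ)).toNat = j.val := by
    rw [hmod]; simp
  simp only [infiniteSum, hdiv, harg, Fin.eta]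

theorem exists_decomp {n : ℕ} (hn : 0 < n) (i : ℤ) :
    ∃ (j : Fin n) (q : ℤ), i = 1 + (j : ℤ) + n * q := by
  have h0 : (0 : ℤ) < n := by exact_mod_cast hn
  have e1 := Int.emod_nonneg (i - 1) h0.ne'
  have e2 := Int.emod_lt_of_pos (i - 1) h0
  refine ⟨⟨((i - 1) % n).toNat, by omega⟩, (i - 1) / n, ?_⟩
  have e3 := Int.mul_ediv_add_emod (i - 1) (n : ℤ)
  simp only [Fin.val_mk]
  omega

theorem sigma_shift {σ : ℤ → ℤ} {n : ℕ} (hsh : ∀ i : ℤ, σ (i + n) = σ i + n) :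
    ∀ (q : ℤ) (i : ℤ), σ (i + n * q) = σ i + n * q := by
  intro q
  induction q using Int.induction_on with
  | zero => simp
  | succ k ih =>
      intro i
      have : i + n * (k + 1) = (i + n * k) + n := by ring
      rw [this, hsh, ih]; ring
  | pred k ih =>
      intro i
      have h2 := hsh (i + n * (-k - 1))
      have : i + n * (-k - 1) + n = i + n * (-k) := by ring
      rw [this] at h2
      rw [ih] at h2
      omega

theorem infiniteSum_shift {n : ℕ} (hn : 0 < n) (π : Equiv.Perm (Fin n)) (i : ℤ) :
    infiniteSum hn π (i + n) = infiniteSum hn π i + n := by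
  obtain ⟨j, q, rfl⟩ := exists_decomp hn i
  have h1 : 1 + (j : ℤ) + n * q + n = 1 + (j : ℤ) + n * (q + 1) := by ring
  rw [h1, infiniteSum_apply, infiniteSum_apply]; ring

theorem infiniteSum_comp {n : ℕ} (hn : 0 < n) (π : Equiv.Perm (Fin n)) (i : ℤ) :
    infiniteSum hn π⁻¹ (infiniteSum hn π i) = i := by
  obtain ⟨j, q, rfl⟩ := exists_decomp hn i
  rw [infiniteSum_apply]
  have h1 : ((π j : ℤ)) + 1 + n * q = 1 + ((π j : ℤ)) + n * q := by ring
  rw [h1, infiniteSum_apply]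
  simp
  omega

theorem infiniteSum_bijective {n : ℕ} (hn : 0 < n) (π : Equiv.Perm (Fin n)) :
    Function.Bijective (infiniteSum hn π) := by
  constructor
  · intro a b hab
    have ha := infiniteSum_comp hn π a
    have hb := infiniteSum_comp hn π b
    rw [hab] at ha; omega
  · intro y
    refine ⟨infiniteSum hn π⁻¹ y, ?_⟩
    have := infiniteSum_comp hn π⁻¹ y
    rwa [inv_inv] at this

theorem cut_infiniteSum {n : ℕ} (hn : 0 < n) (π : Equiv.Perm (Fin n)) (l : ℤ) :
    Cut (infiniteSum hn π) (n * l) := by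
  have h0 : (0 : ℤ) < n := by exact_mod_cast hn
  have key : ∀ x : ℤ, 0 ≤ x → x < n → ∀ q : ℤ, (x + 1 + n * q ≤ n * l ↔ q < l) := by
    intro x hx hxn q
    constructor
    · intro h
      by_contra hc
      push_neg at hc
      have : n * l ≤ n * q := mul_le_mul_of_nonneg_left hc h0.le
      omega
    · intro h
      have h2 : n * (q + 1) ≤ n * l := mul_le_mul_of_nonneg_left (by omega) h0.le
      have e : n * (q + 1) = n * q + n := by ring
      omega
  intro i
  obtain ⟨j, q, rfl⟩ := exists_decomp hn i
  rw [infiniteSum_apply]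
  have hπ1 : (0:ℤ) ≤ (π j : ℤ) := Int.natCast_nonneg _
  have hπ2 : ((π j : ℤ)) < n := by exact_mod_cast (π j).isLt
  have hj1 : (0:ℤ) ≤ (j : ℤ) := Int.natCast_nonneg _
  have hj2 : ((j : ℤ)) < n := by exact_mod_cast j.isLt
  have A := key (π j) hπ1 hπ2 q
  have B := key (j : ℤ) hj1 hj2 q
  constructor
  · intro h
    have := A.mp (by omega)
    have := B.mpr this
    omega
  · intro h
    have := B.mp (by omega)
    have := A.mpr this
    omega

theorem cut_shiftPerm {σ : ℤ → ℤ} {c : ℤ} (r : ℤ) (h : Cut σ c) :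
    Cut (shiftPerm r σ) (c + r) := by
  intro i
  simp only [shiftPerm]
  constructor
  · intro hh
    have := (h (i - r)).mp (by omega); omega
  · intro hh
    have := (h (i - r)).mpr (by omega); omega

theorem cut_shift_n {σ : ℤ → ℤ} {n : ℕ} {c : ℤ} (hsh : ∀ i : ℤ, σ (i + n) = σ i + n)
    (h : Cut σ c) (q : ℤ) : Cut σ (c + n * q) := by
  intro i
  have e : σ i = σ (i - n * q) + n * q := by
    have := sigma_shift hsh q (i - n * q); rw [← this]; congr 1; ring
  rw [e]
  constructor
  · intro hh
    have := (h (i - n * q)).mp (by omega); omega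
  · intro hh
    have := (h (i - n * q)).mpr (by omega); omega

end Stmt2Aux
namespace Stmt2Aux

open Equiv Function Finset

theorem sum_Icc_eq_sum_range (F : ℤ → ℤ) (a : ℤ) (n : ℕ) :
    ∑ i ∈ Finset.Icc (a + 1) (a + n), F i = ∑ x ∈ Finset.range n, F (a + 1 + x) := by
  refine Finset.sum_nbij' (fun y => (y - (a + 1)).toNat) (fun x => a + 1 + (x : ℤ))
    ?_ ?_ ?_ ?_ ?_
  · intro y hy
    simp only [Finset.mem_Icc] at hy
    simp only [Finset.mem_range]
    try dsimp only
    omega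
  · intro x hx
    simp only [Finset.mem_range] at hx
    simp only [Finset.mem_Icc]
    try dsimp only
    omega
  · intro y hy
    simp only [Finset.mem_Icc] at hy
    try dsimp only
    omega
  · intro x hx
    simp only [Finset.mem_range] at hx
    try dsimp only
    omega
  · intro y hy
    simp only [Finset.mem_Icc] at hy
    try dsimp only
    congr 1
    omega

theorem shiftPerm_bijective {σ : ℤ → ℤ} (h : Function.Bijective σ) (r : ℤ) :
    Function.Bijective (shiftPerm r σ) := by
  constructor
  · intro a b hab
    simp only [shiftPerm] at hab
    have := h.injective (show σ (a - r) = σ (b - r) by omega)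
    omega
  · intro y
    obtain ⟨x, hx⟩ := h.surjective (y - r)
    exact ⟨x + r, by simp [shiftPerm, hx]⟩

theorem disp_window_const {σ : ℤ → ℤ} {n : ℕ} (hn : 0 < n)
    (hsh : ∀ i : ℤ, σ (i + n) = σ i + n) :
    ∀ a : ℤ, (∑ x ∈ Finset.range n, (σ (a + 1 + x) - (a + 1 + x))) =
      ∑ x ∈ Finset.range n, (σ (1 + x) - (1 + x)) := by
  have key : ∀ a : ℤ, (∑ x ∈ Finset.range n, (σ (a + 1 + 1 + x) - (a + 1 + 1 + x))) =
      ∑ x ∈ Finset.range n, (σ (a + 1 + x) - (a + 1 + x)) := by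
    intro a
    have h := hsh (a + 1)
    have hf0 : σ (a + 1 + ((0:ℕ):ℤ)) = σ (a + 1) := by norm_num
    have hs := Finset.sum_range_succ (fun x : ℕ => σ (a + 1 + (x:ℤ)) - (a + 1 + (x:ℤ))) n
    have hs' := Finset.sum_range_succ' (fun x : ℕ => σ (a + 1 + (x:ℤ)) - (a + 1 + (x:ℤ))) n
    have h1 : ∀ x ∈ Finset.range n, σ (a + 1 + 1 + (x:ℤ)) - (a + 1 + 1 + (x:ℤ))
        = σ (a + 1 + (((x+1):ℕ):ℤ)) - (a + 1 + (((x+1):ℕ):ℤ)) := by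
      intro x _
      have e : a + 1 + (((x+1):ℕ):ℤ) = a + 1 + 1 + (x:ℤ) := by push_cast; ring
      rw [e]
    rw [Finset.sum_congr rfl h1]
    omega
  intro a
  induction a using Int.induction_on with
  | zero => rfl
  | succ k ih =>
      have := key k
      have e : (k:ℤ) + 1 + 1 = ((k+1):ℤ) + 1 := by ring
      rw [e] at this
      rw [this]; exact ih
  | pred k ih =>
      have := key (-(k:ℤ) - 1)
      have e : (-(k:ℤ) - 1) + 1 + 1 = (-(k:ℤ)) + 1 := by ring
      rw [e] at this
      rw [← this]; exact ih

theorem isAffinePerm_shiftPerm {n : ℕ} {σ : ℤ → ℤ} (hn : 0 < n)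
    (h : IsAffinePerm n σ) (r : ℤ) : IsAffinePerm n (shiftPerm r σ) := by
  obtain ⟨hbij, hsh, hsum⟩ := h
  refine ⟨shiftPerm_bijective hbij r, ?_, ?_⟩
  · intro i
    simp only [shiftPerm]
    have : i + n - r = (i - r) + n := by ring
    rw [this, hsh]
    ring
  · have hin : ∀ (τ : ℤ → ℤ), (∑ i ∈ Finset.Icc (1:ℤ) (n:ℤ), τ i)
        = ∑ x ∈ Finset.range n, τ (1 + x) := by
      intro τ
      have := sum_Icc_eq_sum_range τ 0 n
      simpa using this
    have hdisp0 : (∑ x ∈ Finset.range n, (σ (1 + (x:ℤ)) - (1 + (x:ℤ)))) = 0 := by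
      rw [Finset.sum_sub_distrib]
      rw [← hin σ, ← hin (fun i => i)]
      rw [hsum]
      ring
    have hdisp := disp_window_const hn hsh (-r)
    rw [hdisp0] at hdisp
    rw [hin, hin (fun i => i)]
    have : (∑ x ∈ Finset.range n, (shiftPerm r σ (1 + x))) -
        (∑ x ∈ Finset.range n, ((1:ℤ) + x)) = 0 := by
      rw [← Finset.sum_sub_distrib]
      rw [← hdisp]
      apply Finset.sum_congr rfl
      intro x _
      simp only [shiftPerm]
      have e : (1:ℤ) + (x:ℤ) - r = -r + 1 + (x:ℤ) := by ring
      rw [e]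
      ring
    omega

theorem isAffinePerm_infiniteSum {n : ℕ} (hn : 0 < n) (π : Equiv.Perm (Fin n)) :
    IsAffinePerm n (infiniteSum hn π) := by
  refine ⟨infiniteSum_bijective hn π, infiniteSum_shift hn π, ?_⟩
  have hin : ∀ (τ : ℤ → ℤ), (∑ i ∈ Finset.Icc (1:ℤ) (n:ℤ), τ i)
      = ∑ x ∈ Finset.range n, τ (1 + x) := by
    intro τ
    have := sum_Icc_eq_sum_range τ 0 n
    simpa using this
  rw [hin, hin (fun i => i)]
  rw [← Fin.sum_univ_eq_sum_range (fun x : ℕ => infiniteSum hn π (1 + (x:ℤ))) n]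
  rw [← Fin.sum_univ_eq_sum_range (fun x : ℕ => (1 : ℤ) + (x:ℤ)) n]
  have h1 : ∀ j : Fin n, infiniteSum hn π (1 + ((j:ℕ):ℤ)) = ((π j : ℕ) : ℤ) + 1 := by
    intro j
    have h := infiniteSum_apply hn π j 0
    simp only [mul_zero, add_zero] at h
    exact h
  rw [Finset.sum_congr rfl (fun j _ => h1 j)]
  have h2 := Equiv.sum_comp π (fun j : Fin n => ((j : ℕ) : ℤ) + 1)
  rw [h2]
  apply Finset.sum_congr rfl
  intro j _
  ring

theorem eq_shiftPerm_windowPerm {σ : ℤ → ℤ} {n : ℕ} {c : ℤ} (hn : 0 < n)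
    (hinj : Function.Injective σ) (hsh : ∀ i : ℤ, σ (i + n) = σ i + n)
    (h1 : Cut σ c) (h2 : Cut σ (c + n)) :
    σ = shiftPerm c (infiniteSum hn (windowPerm σ c n)) := by
  funext i
  obtain ⟨j, q, hd⟩ := exists_decomp hn (i - c)
  have hi : i = (c + 1 + (j:ℤ)) + (n:ℤ) * q := by omega
  have hσ : σ i = σ (c + 1 + (j:ℤ)) + n * q := by rw [hi, sigma_shift hsh q]
  have hW := windowPerm_coe hinj h1 h2 j
  simp only [shiftPerm]
  have hic : i - c = 1 + (j:ℤ) + n * q := by omega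
  rw [hic, infiniteSum_apply]
  omega

theorem windowPerm_shift_infiniteSum {n : ℕ} (hn : 0 < n) (π : Equiv.Perm (Fin n)) (c : ℤ) :
    windowPerm (shiftPerm c (infiniteSum hn π)) c n = π := by
  have hbij := shiftPerm_bijective (infiniteSum_bijective hn π) c
  have hc0 : Cut (shiftPerm c (infiniteSum hn π)) c := by
    have := cut_shiftPerm c (cut_infiniteSum hn π 0)
    simpa using this
  have hc1 : Cut (shiftPerm c (infiniteSum hn π)) (c + n) := by
    have := cut_shiftPerm c (cut_infiniteSum hn π 1)
    rw [mul_one] at this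
    have e : (n:ℤ) + c = c + n := by ring
    rwa [e] at this
  apply Equiv.ext
  intro j
  apply Fin.ext
  have h := windowPerm_coe hbij.injective hc0 hc1 j
  simp only [shiftPerm] at h
  have e : c + 1 + (j:ℤ) - c = 1 + (j:ℤ) + (n:ℤ) * 0 := by ring
  rw [e, infiniteSum_apply] at h
  omega

end Stmt2Aux
namespace Stmt2Aux
set_option maxHeartbeats 1000000

open Equiv Function Finset

theorem permDirectSum_castAdd {a b : ℕ} (β : Equiv.Perm (Fin a)) (α : Equiv.Perm (Fin b))
    (i : Fin a) : permDirectSum β α (Fin.castAdd b i) = Fin.castAdd b (β i) := by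
  simp [permDirectSum, finSumFinEquiv_symm_apply_castAdd]

theorem permDirectSum_natAdd {a b : ℕ} (β : Equiv.Perm (Fin a)) (α : Equiv.Perm (Fin b))
    (i : Fin b) : permDirectSum β α (Fin.natAdd a i) = Fin.natAdd a (α i) := by
  simp [permDirectSum, finSumFinEquiv_symm_apply_natAdd]

theorem permCongr_rfl {a : ℕ} (π : Equiv.Perm (Fin a)) (h : a = a) :
    (finCongr h).permCongr π = π := by
  ext x
  simp [Equiv.permCongr_apply]

theorem windowPerm_cast {σ : ℤ → ℤ} {c : ℤ} {a b : ℕ} (h : a = b) :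
    windowPerm σ c b = (finCongr h).permCongr (windowPerm σ c a) := by
  subst h
  rw [permCongr_rfl]

theorem permCongr_permCongr {a b d : ℕ} (h1 : a = b) (h2 : b = d) (π : Equiv.Perm (Fin a)) :
    (finCongr h2).permCongr ((finCongr h1).permCongr π)
      = (finCongr (h1.trans h2)).permCongr π := by
  subst h1; subst h2
  rw [permCongr_rfl, permCongr_rfl]

theorem mem_class_congr (C : (n : ℕ) → Set (Equiv.Perm (Fin n))) {a b : ℕ} (h : a = b)
    {π : Equiv.Perm (Fin a)} (hm : π ∈ C a) : (finCongr h).permCongr π ∈ C b := by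
  subst h
  rwa [permCongr_rfl]

theorem ds_congr_left {a a' b : ℕ} (h : a = a') (β : Equiv.Perm (Fin a))
    (α : Equiv.Perm (Fin b)) :
    permDirectSum ((finCongr h).permCongr β) α
      = (finCongr (by rw [h] : a + b = a' + b)).permCongr (permDirectSum β α) := by
  subst h
  rw [permCongr_rfl, permCongr_rfl]

theorem permDirectSum_inj {a b : ℕ} {β β' : Equiv.Perm (Fin a)} {α α' : Equiv.Perm (Fin b)}
    (h : permDirectSum β α = permDirectSum β' α') : β = β' ∧ α = α' := by
  constructor
  · apply Equiv.ext
    intro i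
    have h1 : permDirectSum β α (Fin.castAdd b i) = permDirectSum β' α' (Fin.castAdd b i) := by
      rw [h]
    rw [permDirectSum_castAdd, permDirectSum_castAdd] at h1
    have := congrArg Fin.val h1
    simp only [Fin.coe_castAdd] at this
    exact Fin.ext this
  · apply Equiv.ext
    intro i
    have h1 : permDirectSum β α (Fin.natAdd a i) = permDirectSum β' α' (Fin.natAdd a i) := by
      rw [h]
    rw [permDirectSum_natAdd, permDirectSum_natAdd] at h1
    have := congrArg Fin.val h1
    simp only [Fin.coe_natAdd] at this
    exact Fin.ext (by omega)

theorem windowPerm_nested {σ : ℤ → ℤ} {c : ℤ} {N n' t : ℕ} (hinj : Function.Injective σ)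
    (hc1 : Cut σ c) (hc2 : Cut σ (c + N)) (hd1 : Cut σ (c + t)) (hd2 : Cut σ (c + t + n'))
    (hle : t + n' ≤ N) :
    PermContains (windowPerm σ c N) (windowPerm σ (c + t) n') := by
  refine ⟨fun j => Fin.castLE hle (Fin.natAdd t j), ?_, ?_⟩
  · intro x y hxy
    simp only [Fin.lt_def, Fin.coe_castLE, Fin.coe_natAdd]
    simp only [Fin.lt_def] at hxy
    omega
  · intro s u
    have Hs := windowPerm_coe hinj hd1 hd2 s
    have Hu := windowPerm_coe hinj hd1 hd2 u
    have HS := windowPerm_coe hinj hc1 hc2 (Fin.castLE hle (Fin.natAdd t s))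
    have HU := windowPerm_coe hinj hc1 hc2 (Fin.castLE hle (Fin.natAdd t u))
    simp only [Fin.coe_castLE, Fin.coe_natAdd] at HS HU
    push_cast at HS HU
    have bs : σ (c + 1 + ((t : ℤ) + (s.val : ℤ))) = σ (c + (t : ℤ) + 1 + (s.val : ℤ)) := by
      congr 1; ring
    have bu : σ (c + 1 + ((t : ℤ) + (u.val : ℤ))) = σ (c + (t : ℤ) + 1 + (u.val : ℤ)) := by
      congr 1; ring
    simp only [Fin.lt_def]
    constructor <;> intro h <;> omega

theorem windowPerm_split {σ : ℤ → ℤ} {c : ℤ} {a b : ℕ} (hinj : Function.Injective σ)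
    (h1 : Cut σ c) (h2 : Cut σ (c + a)) (h3 : Cut σ (c + a + b)) :
    windowPerm σ c (a + b) = permDirectSum (windowPerm σ c a) (windowPerm σ (c + a) b) := by
  have h3' : Cut σ (c + ((a + b : ℕ) : ℤ)) := by
    have e : c + ((a + b : ℕ) : ℤ) = c + a + b := by push_cast; ring
    rw [e]; exact h3
  apply Equiv.ext
  intro j
  refine Fin.addCases ?_ ?_ j
  · intro i
    rw [permDirectSum_castAdd]
    apply Fin.ext
    have L := windowPerm_coe hinj h1 h3' (Fin.castAdd b i)
    have R := windowPerm_coe hinj h1 h2 i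
    rw [Fin.coe_castAdd] at L
    rw [Fin.coe_castAdd]
    omega
  · intro i
    rw [permDirectSum_natAdd]
    apply Fin.ext
    have L := windowPerm_coe hinj h1 h3' (Fin.natAdd a i)
    have R := windowPerm_coe hinj h2 h3 i
    rw [Fin.coe_natAdd] at L
    push_cast at L
    rw [show c + 1 + ((a : ℤ) + (i.val : ℤ)) = c + (a : ℤ) + 1 + (i.val : ℤ) from by ring] at L
    rw [Fin.coe_natAdd]
    omega

theorem pi_of_cuts {σ : ℤ → ℤ} {c : ℤ} {N : ℕ} (hinj : Function.Injective σ)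
    (h1 : Cut σ c) (h2 : Cut σ (c + N)) {d : ℕ} (hd : d ≤ N) (h3 : Cut σ (c + d)) :
    IsPrefixInvariant (windowPerm σ c N) d := by
  intro j
  have H := windowPerm_coe hinj h1 h2 j
  have hj := j.isLt
  constructor
  · intro hlt
    have hσ : σ (c + 1 + (j.val : ℤ)) ≤ c + d := by omega
    have := (h3 _).mp hσ
    omega
  · intro hlt
    have := (h3 (c + 1 + (j.val : ℤ))).mpr (by omega)
    omega

theorem cut_of_pi {σ : ℤ → ℤ} {c : ℤ} {N : ℕ} (hinj : Function.Injective σ)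
    (h1 : Cut σ c) (h2 : Cut σ (c + N)) {d : ℕ} (hd : d ≤ N)
    (hpi : IsPrefixInvariant (windowPerm σ c N) d) : Cut σ (c + d) := by
  intro i
  by_cases hic : i ≤ c
  · have hh := (h1 i).mpr hic
    constructor <;> intro <;> omega
  · by_cases hic2 : i ≤ c + N
    · have hj0 : 0 ≤ i - c - 1 := by omega
      have hjn : ((i - c - 1).toNat : ℤ) = i - c - 1 := Int.toNat_of_nonneg hj0
      have hjlt : (i - c - 1).toNat < N := by omega
      have H := windowPerm_coe hinj h1 h2 ⟨(i - c - 1).toNat, hjlt⟩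
      have hp := hpi ⟨(i - c - 1).toNat, hjlt⟩
      simp only [Fin.val_mk] at H hp
      rw [show c + 1 + ((i - c - 1).toNat : ℤ) = i from by omega] at H
      constructor
      · intro h
        have h4 : ((windowPerm σ c N ⟨(i - c - 1).toNat, hjlt⟩ : Fin N) : ℕ) < d := by omega
        have := hp.mp h4
        omega
      · intro h
        have h4 : (i - c - 1).toNat < d := by omega
        have := hp.mpr h4
        omega
    · have hσ : ¬ σ i ≤ c + N := fun hh => by have := (h2 i).mp hh; omega
      constructor <;> intro <;> omega

theorem pi_congr {a b : ℕ} (h : a = b) (π : Equiv.Perm (Fin a)) (d : ℕ) :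
    IsPrefixInvariant ((finCongr h).permCongr π) d ↔ IsPrefixInvariant π d := by
  subst h
  rw [permCongr_rfl]

theorem pi_ds_left {a b : ℕ} (β : Equiv.Perm (Fin a)) (α : Equiv.Perm (Fin b)) :
    IsPrefixInvariant (permDirectSum β α) a := by
  intro i
  refine Fin.addCases ?_ ?_ i <;> intro i'
  · rw [permDirectSum_castAdd]
    simp only [Fin.coe_castAdd]
    exact iff_of_true (β i').isLt i'.isLt
  · rw [permDirectSum_natAdd]
    simp only [Fin.coe_natAdd]
    exact iff_of_false (by omega) (by omega)

theorem pi_ds_right {a b : ℕ} (β : Equiv.Perm (Fin a)) (α : Equiv.Perm (Fin b)) {d : ℕ}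
    (had : a ≤ d) (h : IsPrefixInvariant (permDirectSum β α) d) :
    IsPrefixInvariant α (d - a) := by
  intro i
  have hh := h (Fin.natAdd a i)
  rw [permDirectSum_natAdd] at hh
  simp only [Fin.coe_natAdd] at hh
  constructor
  · intro h2
    have := hh.mp (by omega)
    omega
  · intro h2
    have := hh.mpr (by omega)
    omega

theorem not_indec_of_pi {k : ℕ} (α : Equiv.Perm (Fin k)) {e : ℕ} (h0 : 0 < e) (hek : e < k)
    (hpi : IsPrefixInvariant α e) : ¬ IsSumIndecomposable α := by
  intro hind
  apply hind
  have hbound : ∀ j : Fin k, (j : ℕ) < e → (α j : ℕ) < e := fun j hj => (hpi j).mpr hj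
  have hbound2 : ∀ j : Fin k, e ≤ (j : ℕ) → e ≤ (α j : ℕ) := by
    intro j hj
    by_contra hc
    have := (hpi j).mp (by omega)
    omega
  have hek' : e + (k - e) = k := by omega
  have ginj : Function.Injective (fun j : Fin e =>
      (⟨(α (Fin.castLE hek.le j) : ℕ),
        hbound (Fin.castLE hek.le j) (by simp)⟩ : Fin e)) := by
    intro x y hxy
    simp only [Fin.mk.injEq] at hxy
    have := α.injective (Fin.ext hxy : α (Fin.castLE hek.le x) = α (Fin.castLE hek.le y))
    have := congrArg Fin.val this
    simp only [Fin.coe_castLE] at this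
    exact Fin.ext this
  have dinj : Function.Injective (fun j : Fin (k - e) =>
      (⟨(α (Fin.cast hek' (Fin.natAdd e j)) : ℕ) - e, by
        have h5 := hbound2 (Fin.cast hek' (Fin.natAdd e j)) (by simp)
        have h6 := (α (Fin.cast hek' (Fin.natAdd e j))).isLt
        omega⟩ : Fin (k - e))) := by
    intro x y hxy
    simp only [Fin.mk.injEq] at hxy
    have h5 := hbound2 (Fin.cast hek' (Fin.natAdd e x)) (by simp)
    have h6 := hbound2 (Fin.cast hek' (Fin.natAdd e y)) (by simp)
    have h7 : α (Fin.cast hek' (Fin.natAdd e x)) = α (Fin.cast hek' (Fin.natAdd e y)) :=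
      Fin.ext (by omega)
    have := congrArg Fin.val (α.injective h7)
    simp only [Fin.coe_cast, Fin.coe_natAdd] at this
    exact Fin.ext (by omega)
  refine ⟨e, k - e, h0, by omega, hek', 
    Equiv.ofBijective _ (Finite.injective_iff_bijective.mp ginj),
    Equiv.ofBijective _ (Finite.injective_iff_bijective.mp dinj), ?_⟩
  apply Equiv.ext
  intro i
  obtain ⟨x, rfl⟩ : ∃ x : Fin (e + (k - e)), (finCongr hek') x = i :=
    ⟨(finCongr hek').symm i, by simp⟩
  rw [Equiv.permCongr_apply, Equiv.symm_apply_apply]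
  refine Fin.addCases ?_ ?_ x
  · intro i'
    rw [permDirectSum_castAdd, Equiv.ofBijective_apply]
    apply Fin.ext
    simp only [finCongr_apply, Fin.coe_cast, Fin.coe_castAdd, Fin.val_mk]
    exact congrArg (fun z => (α z : ℕ)) (Fin.ext (by simp))
  · intro i'
    rw [permDirectSum_natAdd, Equiv.ofBijective_apply]
    apply Fin.ext
    simp only [finCongr_apply, Fin.coe_cast, Fin.coe_natAdd, Fin.val_mk]
    have h5 := hbound2 (Fin.cast hek' (Fin.natAdd e i')) (by simp)
    omega

theorem mem_C_zero {C : (n : ℕ) → Set (Equiv.Perm (Fin n))} (hclass : IsPermClass C)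
    {m : ℕ} {ρ : Equiv.Perm (Fin m)} (hρ : ρ ∈ C m) (τ : Equiv.Perm (Fin 0)) : τ ∈ C 0 :=
  hclass m 0 ρ τ hρ ⟨Fin.elim0, fun a => a.elim0, fun s => s.elim0⟩

end Stmt2Aux
namespace Stmt2Aux

open Equiv Function Finset

theorem sp_shift {m : ℕ} (hm : 0 < m) (ρ : Equiv.Perm (Fin m)) (r : ℤ) {n : ℕ}
    (hdvd : ∀ i : ℤ, infiniteSum hm ρ (i + n) = infiniteSum hm ρ i + n) :
    ∀ i : ℤ, shiftPerm r (infiniteSum hm ρ) (i + n) = shiftPerm r (infiniteSum hm ρ) i + n := by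
  intro i
  simp only [shiftPerm]
  rw [show i + (n : ℤ) - r = (i - r) + n from by ring, hdvd]
  ring

theorem sp_shift_self {m : ℕ} (hm : 0 < m) (ρ : Equiv.Perm (Fin m)) (r : ℤ) :
    ∀ i : ℤ, shiftPerm r (infiniteSum hm ρ) (i + m) = shiftPerm r (infiniteSum hm ρ) i + m :=
  sp_shift hm ρ r (infiniteSum_shift hm ρ)

theorem cut_block {m : ℕ} (hm : 0 < m) (ρ : Equiv.Perm (Fin m)) (r : ℤ) (K : ℤ) :
    Cut (shiftPerm r (infiniteSum hm ρ)) (r + m * K) := by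
  have := cut_shiftPerm r (cut_infiniteSum hm ρ K)
  rwa [show (m : ℤ) * K + r = r + m * K from by ring] at this

theorem windowPerm_block {m : ℕ} (hm : 0 < m) (ρ : Equiv.Perm (Fin m)) (r K : ℤ) :
    windowPerm (shiftPerm r (infiniteSum hm ρ)) (r + m * K) m = ρ := by
  have hinj := (shiftPerm_bijective (infiniteSum_bijective hm ρ) r).injective
  have h1 := cut_block hm ρ r K
  have h2 : Cut (shiftPerm r (infiniteSum hm ρ)) (r + m * K + m) := by
    have := cut_block hm ρ r (K + 1)
    rwa [show r + (m : ℤ) * (K + 1) = r + m * K + m from by ring] at this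
  apply Equiv.ext
  intro j
  apply Fin.ext
  have H := windowPerm_coe hinj h1 h2 j
  simp only [shiftPerm] at H
  rw [show r + (m : ℤ) * K + 1 + (j.val : ℤ) - r = 1 + (j.val : ℤ) + m * K from by ring,
    infiniteSum_apply] at H
  omega

theorem bigWindow_mem {C : (n : ℕ) → Set (Equiv.Perm (Fin n))} (hclass : IsPermClass C)
    (hsum : IsSumClosed C) {m : ℕ} (hm : 0 < m) {ρ : Equiv.Perm (Fin m)} (hρ : ρ ∈ C m)
    (r : ℤ) : ∀ (t : ℕ) (K : ℤ),
    windowPerm (shiftPerm r (infiniteSum hm ρ)) (r + m * K) (t * m) ∈ C (t * m) := by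
  intro t
  induction t with
  | zero =>
      intro K
      have h0 : (0 : ℕ) = 0 * m := by ring
      rw [windowPerm_cast h0 (σ := shiftPerm r (infiniteSum hm ρ)) (c := r + m * K)]
      exact mem_class_congr C h0 (mem_C_zero hclass hρ _)
  | succ t ih =>
      intro K
      have hinj := (shiftPerm_bijective (infiniteSum_bijective hm ρ) r).injective
      have h1 := cut_block hm ρ r K
      have h2 : Cut (shiftPerm r (infiniteSum hm ρ)) (r + m * K + m) := by
        have := cut_block hm ρ r (K + 1)
        rwa [show r + (m : ℤ) * (K + 1) = r + m * K + m from by ring] at this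
      have h3 : Cut (shiftPerm r (infiniteSum hm ρ)) (r + m * K + m + (t * m : ℕ)) := by
        have := cut_block hm ρ r (K + 1 + t)
        rwa [show r + (m : ℤ) * (K + 1 + t) = r + m * K + m + ((t * m : ℕ) : ℤ) from by
          push_cast; ring] at this
      have hsplit := windowPerm_split (a := m) (b := t * m) hinj h1 h2 h3
      have hblock : windowPerm (shiftPerm r (infiniteSum hm ρ)) (r + m * K) m = ρ :=
        windowPerm_block hm ρ r K
      have hrest : windowPerm (shiftPerm r (infiniteSum hm ρ)) (r + m * K + m) (t * m)
          ∈ C (t * m) := by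
        have := ih (K + 1)
        rwa [show r + (m : ℤ) * (K + 1) = r + m * K + m from by ring] at this
      have hmem : windowPerm (shiftPerm r (infiniteSum hm ρ)) (r + m * K) (m + t * m)
          ∈ C (m + t * m) := by
        rw [hsplit, hblock]
        exact hsum m (t * m) ρ _ hρ hrest
      have e : m + t * m = (t + 1) * m := by ring
      rw [windowPerm_cast e (σ := shiftPerm r (infiniteSum hm ρ)) (c := r + m * K)]
      exact mem_class_congr C e hmem

theorem smallWindow_mem {C : (n : ℕ) → Set (Equiv.Perm (Fin n))} (hclass : IsPermClass C)
    (hsum : IsSumClosed C) {m : ℕ} (hm : 0 < m) {ρ : Equiv.Perm (Fin m)} (hρ : ρ ∈ C m)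
    (r : ℤ) (n' : ℕ) (c' : ℤ) (hcut : Cut (shiftPerm r (infiniteSum hm ρ)) c')
    (hcut2 : Cut (shiftPerm r (infiniteSum hm ρ)) (c' + n')) :
    windowPerm (shiftPerm r (infiniteSum hm ρ)) c' n' ∈ C n' := by
  have hm0 : (0 : ℤ) < m := by exact_mod_cast hm
  have hinj := (shiftPerm_bijective (infiniteSum_bijective hm ρ) r).injective
  set K := (c' - r) / m with hK
  have hmod1 := Int.emod_nonneg (c' - r) hm0.ne'
  have hmod2 := Int.emod_lt_of_pos (c' - r) hm0
  have hdm := Int.mul_ediv_add_emod (c' - r) m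
  rw [← hK] at hdm
  set c : ℤ := r + m * K with hc
  have hcc' : c ≤ c' := by omega
  have hcc'2 : c' - c < m := by omega
  set N : ℕ := (n' + 1) * m with hN
  have hNn : (N : ℤ) = ((n' : ℤ) + 1) * m := by rw [hN]; push_cast; ring
  have hcN : c' + n' ≤ c + N := by
    have e : ((n' : ℤ) + 1) * m = (n' : ℤ) * m + m := by ring
    have h2 : (n' : ℤ) ≤ (n' : ℤ) * m :=
      le_mul_of_one_le_right (Int.natCast_nonneg n') (by omega)
    omega
  have hbig : Cut (shiftPerm r (infiniteSum hm ρ)) (c + N) := by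
    have := cut_block hm ρ r (K + (n' + 1))
    rwa [show r + (m : ℤ) * (K + (n' + 1)) = c + N from by rw [hc, hNn]; push_cast; ring]
      at this
  have hsmall1 : Cut (shiftPerm r (infiniteSum hm ρ)) (c + ((c' - c).toNat : ℤ)) := by
    rwa [show c + ((c' - c).toNat : ℤ) = c' from by omega]
  have hsmall2 : Cut (shiftPerm r (infiniteSum hm ρ)) (c + ((c' - c).toNat : ℤ) + n') := by
    rwa [show c + ((c' - c).toNat : ℤ) + n' = c' + n' from by omega]
  have hnest := windowPerm_nested hinj (cut_block hm ρ r K) hbig hsmall1 hsmall2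
    (by omega : (c' - c).toNat + n' ≤ N)
  have hbigmem : windowPerm (shiftPerm r (infiniteSum hm ρ)) c N ∈ C N := by
    have := bigWindow_mem hclass hsum hm hρ r (n' + 1) K
    rwa [← hN] at this
  have := hclass N n' _ _ hbigmem hnest
  rwa [show c + ((c' - c).toNat : ℤ) = c' from by omega] at this

theorem data_no_mid_pi {n k : ℕ} (hnk : (n - k) + k = n) (α : Equiv.Perm (Fin k))
    (hind : IsSumIndecomposable α) (β : Equiv.Perm (Fin (n - k))) {d : ℕ}
    (h1 : n - k < d) (h2 : d < n)
    (hpi : IsPrefixInvariant ((finCongr hnk).permCongr (permDirectSum β α)) d) : False := by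
  have hp := pi_ds_right β α (by omega) ((pi_congr hnk _ d).mp hpi)
  exact (not_indec_of_pi α (by omega) (by omega) hp) hind

theorem data_cut_ge {n k : ℕ} (hn : 0 < n) (hkn : k ≤ n) (hnk : (n - k) + k = n)
    (α : Equiv.Perm (Fin k)) (hind : IsSumIndecomposable α) (β : Equiv.Perm (Fin (n - k)))
    {rr : ℕ} (hrk : rr < k) {t : ℤ} (ht0 : 0 ≤ t) (htr : t < rr)
    (hcut : Cut (shiftPerm (rr : ℕ) (infiniteSum hn
      ((finCongr hnk).permCongr (permDirectSum β α)))) t) : False := by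
  set π := (finCongr hnk).permCongr (permDirectSum β α) with hπ
  set σ := shiftPerm ((rr : ℕ) : ℤ) (infiniteSum hn π) with hσ
  have hinj := (shiftPerm_bijective (infiniteSum_bijective hn π) ((rr : ℕ) : ℤ)).injective
  have hsh := sp_shift_self hn π ((rr : ℕ) : ℤ)
  have hcutr : Cut σ ((rr : ℕ) : ℤ) := by
    have := cut_block hn π ((rr : ℕ) : ℤ) 0
    rwa [show ((rr : ℕ) : ℤ) + (n : ℤ) * 0 = ((rr : ℕ) : ℤ) from by ring] at this
  have hcutrn : Cut σ ((rr : ℕ) + (n : ℤ)) := by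
    have := cut_block hn π ((rr : ℕ) : ℤ) 1
    rwa [show ((rr : ℕ) : ℤ) + (n : ℤ) * 1 = ((rr : ℕ) : ℤ) + n from by ring] at this
  have hcuttn : Cut σ (((rr : ℕ) : ℤ) + ((t + n - rr).toNat : ℤ)) := by
    have := cut_shift_n hsh hcut 1
    rwa [show t + (n : ℤ) * 1 = ((rr : ℕ) : ℤ) + ((t + n - rr).toNat : ℤ) from by omega]
      at this
  have hdn : (t + n - rr).toNat ≤ n := by omega
  have hpi := pi_of_cuts hinj hcutr hcutrn hdn hcuttn
  rw [windowPerm_shift_infiniteSum hn π ((rr : ℕ) : ℤ)] at hpi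
  exact data_no_mid_pi hnk α hind β (by omega) (by omega) hpi

theorem data_cut_self {n k : ℕ} (hn : 0 < n) (hnk : (n - k) + k = n)
    (α : Equiv.Perm (Fin k)) (β : Equiv.Perm (Fin (n - k))) (rr : ℕ) :
    Cut (shiftPerm (rr : ℕ) (infiniteSum hn
      ((finCongr hnk).permCongr (permDirectSum β α)))) rr := by
  have := cut_block hn ((finCongr hnk).permCongr (permDirectSum β α)) ((rr : ℕ) : ℤ) 0
  rwa [show ((rr : ℕ) : ℤ) + (n : ℤ) * 0 = ((rr : ℕ) : ℤ) from by ring] at this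

end Stmt2Aux
namespace Stmt2Aux

open Equiv Function Finset

variable (C : (n : ℕ) → Set (Equiv.Perm (Fin n)))

/-- The data parametrizing `aff(C)_n`. -/
def DType (n : ℕ) : Type :=
  (k : {x : ℕ // x ∈ Finset.Icc 1 n}) ×
    ({α : Equiv.Perm (Fin (k : ℕ)) // α ∈ C (k : ℕ) ∧ IsSumIndecomposable α} ×
     {β : Equiv.Perm (Fin (n - (k : ℕ))) // β ∈ C (n - (k : ℕ))} × Fin (k : ℕ))

def dataPerm {n : ℕ} (x : DType C n) : Equiv.Perm (Fin n) :=
  (finCongr (by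
      have := Finset.mem_Icc.mp x.1.2
      omega : (n - (x.1 : ℕ)) + (x.1 : ℕ) = n)).permCongr
    (permDirectSum x.2.2.1.val x.2.1.val)

def PhiFun {n : ℕ} (hn0 : 0 < n) (x : DType C n) : ℤ → ℤ :=
  shiftPerm (((x.2.2.2 : Fin (x.1 : ℕ)) : ℕ) : ℤ) (infiniteSum hn0 (dataPerm C x))

theorem dataPerm_mem (hsum : IsSumClosed C) {n : ℕ} (x : DType C n) :
    dataPerm C x ∈ C n :=
  mem_class_congr C _ (hsum _ _ x.2.2.1.val x.2.1.val x.2.2.1.2 x.2.1.2.1)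

theorem phiFun_aff {n : ℕ} (hn0 : 0 < n) (x : DType C n) :
    IsAffinePerm n (PhiFun C hn0 x) :=
  isAffinePerm_shiftPerm hn0 (isAffinePerm_infiniteSum hn0 (dataPerm C x)) _

theorem phiFun_mem (hsum : IsSumClosed C) {n : ℕ} (hn0 : 0 < n) (x : DType C n) :
    PhiFun C hn0 x ∈ AffOfClass C :=
  ⟨n, hn0, dataPerm C x, _, dataPerm_mem C hsum x, rfl⟩

theorem phiFun_inj {n : ℕ} (hn0 : 0 < n) : Function.Injective (PhiFun C hn0) := by
  intro x y hxy
  obtain ⟨ks, xa, xb, xr⟩ := x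
  obtain ⟨ks', ya, yb, yr⟩ := y
  have hk1 := Finset.mem_Icc.mp ks.2
  have hk1' := Finset.mem_Icc.mp ks'.2
  have hnk : (n - (ks : ℕ)) + (ks : ℕ) = n := by omega
  have hnk' : (n - (ks' : ℕ)) + (ks' : ℕ) = n := by omega
  simp only [PhiFun] at hxy
  -- Step 1: equality of shifts
  have hr : (xr : ℕ) = (yr : ℕ) := by
    by_contra hne
    rcases Nat.lt_or_ge (xr : ℕ) (yr : ℕ) with h | h
    · have hcx : Cut (shiftPerm (((xr : Fin (ks:ℕ)) : ℕ) : ℤ)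
          (infiniteSum hn0 (dataPerm C ⟨ks, xa, xb, xr⟩))) ((xr : ℕ) : ℤ) :=
        data_cut_self hn0 hnk xa.val xb.val (xr : ℕ)
      rw [hxy] at hcx
      exact data_cut_ge hn0 hk1'.2 hnk' ya.val ya.2.2 yb.val yr.isLt
        (Int.natCast_nonneg _) (by exact_mod_cast h) hcx
    · have hne2 : (yr : ℕ) < (xr : ℕ) := by omega
      have hcy : Cut (shiftPerm (((yr : Fin (ks':ℕ)) : ℕ) : ℤ)
          (infiniteSum hn0 (dataPerm C ⟨ks', ya, yb, yr⟩))) ((yr : ℕ) : ℤ) :=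
        data_cut_self hn0 hnk' ya.val yb.val (yr : ℕ)
      rw [← hxy] at hcy
      exact data_cut_ge hn0 hk1.2 hnk xa.val xa.2.2 xb.val xr.isLt
        (Int.natCast_nonneg _) (by exact_mod_cast hne2) hcy
  -- Step 2: equality of window permutations
  have hrz : (((xr : Fin (ks:ℕ)) : ℕ) : ℤ) = (((yr : Fin (ks':ℕ)) : ℕ) : ℤ) := by
    exact_mod_cast hr
  have hπ : dataPerm C ⟨ks, xa, xb, xr⟩ = dataPerm C ⟨ks', ya, yb, yr⟩ := by
    have w1 := windowPerm_shift_infiniteSum hn0 (dataPerm C ⟨ks, xa, xb, xr⟩)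
      (((xr : Fin (ks:ℕ)) : ℕ) : ℤ)
    have w2 := windowPerm_shift_infiniteSum hn0 (dataPerm C ⟨ks', ya, yb, yr⟩)
      (((yr : Fin (ks':ℕ)) : ℕ) : ℤ)
    rw [← w1, ← w2, hxy, hrz]
  -- Step 3: equality of block sizes
  have hkk' : (ks : ℕ) = (ks' : ℕ) := by
    by_contra hne
    rcases Nat.lt_or_ge (ks : ℕ) (ks' : ℕ) with h | h
    · have hpx : IsPrefixInvariant (dataPerm C ⟨ks, xa, xb, xr⟩) (n - (ks : ℕ)) :=
        (pi_congr hnk _ _).mpr (pi_ds_left xb.val xa.val)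
      rw [hπ] at hpx
      exact data_no_mid_pi hnk' ya.val ya.2.2 yb.val (by omega) (by omega) hpx
    · have h2 : (ks' : ℕ) < (ks : ℕ) := by omega
      have hpy : IsPrefixInvariant (dataPerm C ⟨ks', ya, yb, yr⟩) (n - (ks' : ℕ)) :=
        (pi_congr hnk' _ _).mpr (pi_ds_left yb.val ya.val)
      rw [← hπ] at hpy
      exact data_no_mid_pi hnk xa.val xa.2.2 xb.val (by omega) (by omega) hpy
  have hks : ks = ks' := Subtype.ext hkk'
  subst hks
  have hds : permDirectSum xb.val xa.val = permDirectSum yb.val ya.val :=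
    Equiv.injective _ hπ
  obtain ⟨hb, ha⟩ := permDirectSum_inj hds
  have hxa : xa = ya := Subtype.ext ha
  have hxb : xb = yb := Subtype.ext hb
  have hxr : xr = yr := Fin.ext hr
  subst hxa
  subst hxb
  subst hxr
  rfl

end Stmt2Aux
namespace Stmt2Aux

open Equiv Function Finset

theorem phiFun_surj (C : (n : ℕ) → Set (Equiv.Perm (Fin n))) (hclass : IsPermClass C)
    (hsum : IsSumClosed C) {n : ℕ} (hn0 : 0 < n) (σ : ℤ → ℤ)
    (hA : IsAffinePerm n σ) (hM : σ ∈ AffOfClass C) :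
    ∃ x : DType C n, PhiFun C hn0 x = σ := by
  obtain ⟨m, hm, ρ, r, hρ, hσ⟩ := hM
  obtain ⟨hbij, hsh, -⟩ := hA
  have hinj := hbij.injective
  have hcr : Cut σ r := by
    rw [hσ]
    have := cut_block hm ρ r 0
    rwa [show r + (m:ℤ)*0 = r from by ring] at this
  have hn0' : (0:ℤ) < n := by exact_mod_cast hn0
  have hcrmod : Cut σ (r % n) := by
    have := cut_shift_n hsh hcr (-(r / n))
    rwa [show r + (n:ℤ)*(-(r/n)) = r % n from by rw [Int.emod_def]; ring] at this
  have hmod1 := Int.emod_nonneg r hn0'.ne'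
  have hmod2 := Int.emod_lt_of_pos r hn0'
  have hTne : (r % n).toNat ∈ {t : ℕ | Cut σ (t : ℤ)} := by
    simp only [Set.mem_setOf_eq]
    rwa [Int.toNat_of_nonneg hmod1]
  set r0 := sInf {t : ℕ | Cut σ (t : ℤ)} with hr0def
  have hr0T : r0 ∈ {t : ℕ | Cut σ (t : ℤ)} := Nat.sInf_mem ⟨_, hTne⟩
  have hr0cut : Cut σ (r0 : ℤ) := hr0T
  have hr0lt : r0 < n := by
    have h1 := Nat.sInf_le hTne
    rw [← hr0def] at h1
    omega
  have hr0min : ∀ t : ℕ, t < r0 → ¬ Cut σ (t:ℤ) := fun t ht hc =>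
    Nat.notMem_of_lt_sInf ht hc
  have hr0cutn : Cut σ ((r0:ℤ) + n) := by
    have := cut_shift_n hsh hr0cut 1
    rwa [show (r0:ℤ) + (n:ℤ)*1 = (r0:ℤ) + n from by ring] at this
  have hσπ : σ = shiftPerm (r0:ℤ) (infiniteSum hn0 (windowPerm σ (r0:ℤ) n)) :=
    eq_shiftPerm_windowPerm hn0 hinj hsh hr0cut hr0cutn
  have hπC : windowPerm σ (r0:ℤ) n ∈ C n := by
    have h1 : Cut (shiftPerm r (infiniteSum hm ρ)) (r0:ℤ) := by rw [← hσ]; exact hr0cut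
    have h2 : Cut (shiftPerm r (infiniteSum hm ρ)) ((r0:ℤ) + n) := by
      rw [← hσ]; exact hr0cutn
    have := smallWindow_mem hclass hsum hm hρ r n (r0:ℤ) h1 h2
    rwa [← hσ] at this
  have hDS0 : 0 ∈ {d : ℕ | d < n ∧ Cut σ ((r0:ℤ) + d)} := by
    refine ⟨hn0, ?_⟩
    rwa [show (r0:ℤ) + ((0:ℕ):ℤ) = (r0:ℤ) from by norm_num]
  have hDSb : BddAbove {d : ℕ | d < n ∧ Cut σ ((r0:ℤ) + d)} :=
    ⟨n, fun d hd => (hd.1).le⟩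
  set d0 := sSup {d : ℕ | d < n ∧ Cut σ ((r0:ℤ) + d)} with hd0def
  have hd0mem : d0 ∈ {d : ℕ | d < n ∧ Cut σ ((r0:ℤ) + d)} := Nat.sSup_mem ⟨0, hDS0⟩ hDSb
  have hd0lt : d0 < n := hd0mem.1
  have hd0cut : Cut σ ((r0:ℤ) + d0) := hd0mem.2
  have hd0max : ∀ d ∈ {d : ℕ | d < n ∧ Cut σ ((r0:ℤ) + d)}, d ≤ d0 := fun d hd =>
    le_csSup hDSb hd
  set k := n - d0 with hkdef
  have hk1 : 1 ≤ k := by omega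
  have hdk : d0 + k = n := by omega
  have hcut3 : Cut σ ((r0:ℤ) + d0 + k) := by
    rwa [show (r0:ℤ) + (d0:ℤ) + (k:ℤ) = (r0:ℤ) + (n:ℤ) from by push_cast; omega]
  have hsplit : windowPerm σ (r0:ℤ) (d0 + k)
      = permDirectSum (windowPerm σ (r0:ℤ) d0) (windowPerm σ ((r0:ℤ) + d0) k) :=
    windowPerm_split hinj hr0cut hd0cut hcut3
  have hcast : windowPerm σ (r0:ℤ) n
      = (finCongr hdk).permCongr (windowPerm σ (r0:ℤ) (d0+k)) := windowPerm_cast hdk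
  have hβC : windowPerm σ (r0:ℤ) d0 ∈ C d0 := by
    have hc1 : Cut σ ((r0:ℤ) + ((0:ℕ):ℤ)) := by
      rwa [show (r0:ℤ) + ((0:ℕ):ℤ) = (r0:ℤ) from by norm_num]
    have hc2 : Cut σ ((r0:ℤ) + ((0:ℕ):ℤ) + d0) := by
      rwa [show (r0:ℤ) + ((0:ℕ):ℤ) + (d0:ℤ) = (r0:ℤ) + (d0:ℤ) from by norm_num]
    have hnest := windowPerm_nested (t := 0) (n' := d0) hinj hr0cut hr0cutn hc1 hc2
      (by omega)
    have hre : (r0:ℤ) + ((0:ℕ):ℤ) = (r0:ℤ) := by norm_num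
    rw [hre] at hnest
    exact hclass n d0 _ _ hπC hnest
  have hαC : windowPerm σ ((r0:ℤ)+d0) k ∈ C k := by
    have hnest := windowPerm_nested (t := d0) (n' := k) hinj hr0cut hr0cutn hd0cut hcut3
      (by omega)
    exact hclass n k _ _ hπC hnest
  have hαind : IsSumIndecomposable (windowPerm σ ((r0:ℤ)+d0) k) := by
    intro hdec
    obtain ⟨a, b, ha, hb, hab, γ, δ, hd⟩ := hdec
    have hpa : IsPrefixInvariant (windowPerm σ ((r0:ℤ)+d0) k) a := by
      rw [hd]; exact (pi_congr hab _ a).mpr (pi_ds_left γ δ)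
    have hcut4 : Cut σ ((r0:ℤ) + d0 + a) :=
      cut_of_pi hinj hd0cut hcut3 (by omega) hpa
    have hmem : d0 + a ∈ {d : ℕ | d < n ∧ Cut σ ((r0:ℤ) + d)} := by
      refine ⟨by omega, ?_⟩
      rwa [show (r0:ℤ) + ((d0 + a:ℕ):ℤ) = (r0:ℤ) + (d0:ℤ) + (a:ℤ) from by push_cast; ring]
    have := hd0max _ hmem
    omega
  have hr0k : r0 < k := by
    by_contra hge
    push_neg at hge
    have hc : Cut σ (((r0 - k : ℕ)):ℤ) := by
      have := cut_shift_n hsh hd0cut (-1)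
      rwa [show (r0:ℤ) + (d0:ℤ) + (n:ℤ)*(-1) = (((r0 - k:ℕ)):ℤ) from by push_cast; omega]
        at this
    exact hr0min (r0 - k) (by omega) hc
  have hndk : d0 = n - k := by omega
  refine ⟨⟨⟨k, Finset.mem_Icc.mpr ⟨hk1, by omega⟩⟩,
    ⟨windowPerm σ ((r0:ℤ)+d0) k, hαC, hαind⟩,
    ⟨(finCongr hndk).permCongr (windowPerm σ (r0:ℤ) d0), mem_class_congr C hndk hβC⟩,
    ⟨r0, hr0k⟩⟩, ?_⟩
  simp only [PhiFun, dataPerm]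
  rw [ds_congr_left hndk (windowPerm σ (r0:ℤ) d0) (windowPerm σ ((r0:ℤ)+d0) k)]
  rw [permCongr_permCongr]
  conv_rhs => rw [hσπ]
  congr 1
  rw [hcast, hsplit]

end Stmt2Aux
namespace Stmt2Aux

open Equiv Function Finset

theorem nat_card_sigma {ι : Type*} [Fintype ι] (fib : ι → Type*) [∀ i, Finite (fib i)] :
    Nat.card (Sigma fib) = ∑ i, Nat.card (fib i) := by
  letI : ∀ i, Fintype (fib i) := fun i => Fintype.ofFinite _
  rw [Nat.card_eq_fintype_card, Fintype.card_sigma]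
  exact Finset.sum_congr rfl (fun i _ => (Nat.card_eq_fintype_card).symm)

theorem card_C_eq (C : (n : ℕ) → Set (Equiv.Perm (Fin n))) {a b : ℕ} (h : a = b) :
    Nat.card {β : Equiv.Perm (Fin a) // β ∈ C a}
      = Nat.card {β : Equiv.Perm (Fin b) // β ∈ C b} := by
  subst h
  rfl

end Stmt2Aux

/-- `˜fₙ = ∑_{k=1}^n k·g_k·f_{n−k}` for a sum closed class `C`. -/
theorem stmt2 (C : (n : ℕ) → Set (Equiv.Perm (Fin n)))
    (hclass : IsPermClass C) (hsum : IsSumClosed C)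
    (f g : ℕ → ℕ) (hf0 : f 0 = 1)
    (hf : ∀ j : ℕ, 1 ≤ j → f j = (C j).ncard)
    (hg : ∀ j : ℕ, 1 ≤ j →
      g j = Set.ncard {π : Equiv.Perm (Fin j) | π ∈ C j ∧ IsSumIndecomposable π})
    (n : ℕ) (hn : 1 ≤ n) :
    Nat.card {σ : ℤ → ℤ // IsAffinePerm n σ ∧ σ ∈ AffOfClass C} =
      ∑ k ∈ Finset.Icc 1 n, k * g k * f (n - k) := by
  classical
  have hn0 : 0 < n := hn
  have hbij : Function.Bijective (fun x : Stmt2Aux.DType C n =>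
      (⟨Stmt2Aux.PhiFun C hn0 x, Stmt2Aux.phiFun_aff C hn0 x,
        Stmt2Aux.phiFun_mem C hsum hn0 x⟩ :
        {σ : ℤ → ℤ // IsAffinePerm n σ ∧ σ ∈ AffOfClass C})) := by
    constructor
    · intro x y hxy
      exact Stmt2Aux.phiFun_inj C hn0 (congrArg Subtype.val hxy)
    · rintro ⟨σ, hA, hM⟩
      obtain ⟨x, hx⟩ := Stmt2Aux.phiFun_surj C hclass hsum hn0 σ hA hM
      exact ⟨x, Subtype.ext hx⟩
  rw [← Nat.card_congr (Equiv.ofBijective _ hbij)]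
  have hcard : Nat.card (Stmt2Aux.DType C n) =
      ∑ kk : {x : ℕ // x ∈ Finset.Icc 1 n},
        Nat.card {α : Equiv.Perm (Fin (kk : ℕ)) //
            α ∈ C (kk : ℕ) ∧ IsSumIndecomposable α} *
          (Nat.card {β : Equiv.Perm (Fin (n - (kk : ℕ))) // β ∈ C (n - (kk : ℕ))} *
            (kk : ℕ)) := by
    rw [show (Stmt2Aux.DType C n) = Sigma (fun kk : {x : ℕ // x ∈ Finset.Icc 1 n} =>
      ({α : Equiv.Perm (Fin (kk : ℕ)) // α ∈ C (kk : ℕ) ∧ IsSumIndecomposable α} ×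
       {β : Equiv.Perm (Fin (n - (kk : ℕ))) // β ∈ C (n - (kk : ℕ))} × Fin (kk : ℕ)))
      from rfl]
    rw [Stmt2Aux.nat_card_sigma]
    refine Finset.sum_congr rfl (fun kk _ => ?_)
    rw [Nat.card_prod, Nat.card_prod]
    have : Nat.card (Fin (kk : ℕ)) = (kk : ℕ) := by
      simp [Nat.card_eq_fintype_card]
    rw [this]
  rw [hcard]
  rw [Finset.sum_coe_sort (Finset.Icc 1 n) (fun kv =>
    Nat.card {α : Equiv.Perm (Fin kv) // α ∈ C kv ∧ IsSumIndecomposable α} *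
      (Nat.card {β : Equiv.Perm (Fin (n - kv)) // β ∈ C (n - kv)} * kv))]
  refine Finset.sum_congr rfl (fun k hk => ?_)
  have hk1 := Finset.mem_Icc.mp hk
  have hgk : Nat.card {α : Equiv.Perm (Fin k) // α ∈ C k ∧ IsSumIndecomposable α} = g k := by
    rw [hg k hk1.1]
    exact Nat.card_coe_set_eq _
  rw [hgk]
  by_cases hgz : g k = 0
  · rw [hgz]
    ring
  · have hfk : Nat.card {β : Equiv.Perm (Fin (n - k)) // β ∈ C (n - k)} = f (n - k) := by
      by_cases hkn : k = n
      · have hsub : n - k = 0 := by omega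
        rw [Stmt2Aux.card_C_eq C hsub, hsub, hf0]
        have hne : {π : Equiv.Perm (Fin k) | π ∈ C k ∧ IsSumIndecomposable π}.Nonempty := by
          apply Set.nonempty_of_ncard_ne_zero
          rw [← hg k hk1.1]
          exact hgz
        obtain ⟨α0, hα0, -⟩ := hne
        have hall : ∀ τ : Equiv.Perm (Fin 0), τ ∈ C 0 := fun τ =>
          Stmt2Aux.mem_C_zero hclass hα0 τ
        rw [Nat.card_congr (Equiv.subtypeUnivEquiv hall)]
        simp [Nat.card_eq_fintype_card]
      · rw [hf (n - k) (by omega)]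
        exact Nat.card_coe_set_eq _
    rw [hfk]
    ring
end

section
/- For every n ≥ 1, ∑_{π ∈ S_n} a(π) equals the number of sum-indecomposable permutations of size n+1, where the sum is over all permutations π of size n. -/
section Aux

lemma val_succAbove' {n : ℕ} (p : Fin (n+1)) (i : Fin n) :
    ((p.succAbove i) : ℕ) = if (i:ℕ) < (p:ℕ) then (i:ℕ) else (i:ℕ)+1 := by
  rcases lt_or_ge (Fin.castSucc i) p with h | h
  · rw [Fin.succAbove_of_castSucc_lt _ _ h]
    have h' : (i:ℕ) < (p:ℕ) := by
      have := Fin.lt_def.mp h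
      simpa using this
    simp [h']
  · rw [Fin.succAbove_of_le_castSucc _ _ h]
    have h' : ¬ (i:ℕ) < (p:ℕ) := by
      have := Fin.le_def.mp h
      simp only [Fin.coe_castSucc] at this
      omega
    simp [h']

lemma directSum_val {a b : ℕ} (σ : Equiv.Perm (Fin a)) (ρ : Equiv.Perm (Fin b)) (j : Fin (a+b)) :
    ((permDirectSum σ ρ) j : ℕ) =
      if h : (j:ℕ) < a then (σ ⟨(j:ℕ), h⟩ : ℕ)
      else a + (ρ ⟨(j:ℕ) - a, by omega⟩ : ℕ) := by
  rcases lt_or_ge ((j:ℕ)) a with h | h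
  · rw [dif_pos h]
    have hj : j = Fin.castAdd b ⟨(j:ℕ), h⟩ := by ext; simp
    conv_lhs => rw [hj]
    simp only [permDirectSum, Equiv.trans_apply, finSumFinEquiv_symm_apply_castAdd,
      Equiv.sumCongr_apply, Sum.map_inl, finSumFinEquiv_apply_left, Fin.coe_castAdd]
  · rw [dif_neg (by omega)]
    have hj : j = Fin.natAdd a ⟨(j:ℕ) - a, by omega⟩ := by
      ext; simp; omega
    conv_lhs => rw [hj]
    simp only [permDirectSum, Equiv.trans_apply, finSumFinEquiv_symm_apply_natAdd,
      Equiv.sumCongr_apply, Sum.map_inr, finSumFinEquiv_apply_right, Fin.coe_natAdd]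

lemma permCongr_val {a b m : ℕ} (hab : a + b = m) (p : Equiv.Perm (Fin (a+b))) (i : Fin m) :
    (((finCongr hab).permCongr p) i : ℕ) = (p (Fin.cast hab.symm i) : ℕ) := by
  simp [Equiv.permCongr_apply]

/-- decomposable → has a proper invariant prefix -/
lemma exists_prefix_of_not_indec {m : ℕ} (π : Equiv.Perm (Fin m))
    (h : ¬ IsSumIndecomposable π) : ∃ d, 1 ≤ d ∧ d < m ∧ IsPrefixInvariant π d := by
  rw [IsSumIndecomposable, not_not] at h
  obtain ⟨a, b, ha, hb, hab, σ, ρ, rfl⟩ := h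
  refine ⟨a, ha, by omega, ?_⟩
  intro i
  rw [permCongr_val hab, directSum_val]
  split_ifs with h
  · simp only [Fin.coe_cast] at h ⊢
    have := (σ ⟨(i:ℕ), h⟩).isLt
    omega
  · simp only [Fin.coe_cast] at h ⊢
    omega

/-- proper invariant prefix → decomposable -/
lemma not_indec_of_prefix {m : ℕ} (π : Equiv.Perm (Fin m))
    {d : ℕ} (hd1 : 1 ≤ d) (hdm : d < m) (hp : IsPrefixInvariant π d) :
    ¬ IsSumIndecomposable π := by
  rw [IsSumIndecomposable, not_not]
  have hab : d + (m - d) = m := by omega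
  have hfa : ∀ i : Fin d, ((π ⟨(i:ℕ), by omega⟩ : Fin m) : ℕ) < d := by
    intro i
    exact (hp ⟨(i:ℕ), by omega⟩).mpr i.isLt
  have hfb : ∀ i : Fin (m - d), d ≤ ((π ⟨d + (i:ℕ), by omega⟩ : Fin m) : ℕ) := by
    intro i
    have := (hp ⟨d + (i:ℕ), by omega⟩).not
    simp only [not_lt] at this
    exact this.mpr (by simp)
  let σ : Equiv.Perm (Fin d) := Equiv.ofBijective
    (fun i => ⟨((π ⟨(i:ℕ), by omega⟩ : Fin m) : ℕ), hfa i⟩)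
    (Finite.injective_iff_bijective.mp (by
      intro x y hxy
      have h1 : ((π ⟨(x:ℕ), by omega⟩ : Fin m) : ℕ) = ((π ⟨(y:ℕ), by omega⟩ : Fin m) : ℕ) := by
        simpa [Fin.mk.injEq] using hxy
      have h2 : (⟨(x:ℕ), by omega⟩ : Fin m) = ⟨(y:ℕ), by omega⟩ :=
        π.injective (Fin.ext h1)
      exact Fin.ext (by simpa using h2)))
  let ρ : Equiv.Perm (Fin (m - d)) := Equiv.ofBijective
    (fun i => ⟨((π ⟨d + (i:ℕ), by omega⟩ : Fin m) : ℕ) - d, by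
      have := (π ⟨d + (i:ℕ), by omega⟩ : Fin m).isLt
      have := hfb i
      omega⟩)
    (Finite.injective_iff_bijective.mp (by
      intro x y hxy
      have hx := hfb x
      have hy := hfb y
      have h1 : ((π ⟨d + (x:ℕ), by omega⟩ : Fin m) : ℕ) = ((π ⟨d + (y:ℕ), by omega⟩ : Fin m) : ℕ) := by
        simp only [Fin.mk.injEq] at hxy
        omega
      have h2 : (⟨d + (x:ℕ), by omega⟩ : Fin m) = ⟨d + (y:ℕ), by omega⟩ :=
        π.injective (Fin.ext h1)
      simp only [Fin.mk.injEq] at h2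
      exact Fin.ext (by omega)))
  refine ⟨d, m - d, hd1, by omega, hab, σ, ρ, ?_⟩
  apply Equiv.ext
  intro i
  apply Fin.ext
  rw [permCongr_val hab, directSum_val]
  split_ifs with h
  · simp only [Fin.coe_cast] at h ⊢
    show (π i : ℕ) = ((σ ⟨(i:ℕ), h⟩ : Fin d) : ℕ)
    simp only [σ, Equiv.ofBijective_apply]
  · simp only [Fin.coe_cast] at h ⊢
    show (π i : ℕ) = d + ((ρ ⟨(i:ℕ) - d, by omega⟩ : Fin (m-d)) : ℕ)
    simp only [ρ, Equiv.ofBijective_apply]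
    have he : (⟨d + ((i:ℕ) - d), by omega⟩ : Fin m) = i := Fin.ext (by simp; omega)
    rw [show (π ⟨d + ((i:ℕ) - d), by omega⟩ : Fin m) = π i from congrArg π he]
    have hge : d ≤ (π i : ℕ) := by
      have := (hp i).not
      simp only [not_lt] at this
      exact this.mpr (by omega)
    omega

end Aux

section Aux2

variable {n : ℕ}

noncomputable def insP (π : Equiv.Perm (Fin n)) (k : Fin (n+1)) : Equiv.Perm (Fin (n+1)) :=
  Equiv.ofBijective (Fin.insertNth k (Fin.last n) (fun j => (π j).castSucc))
    (Finite.injective_iff_bijective.mp (by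
      intro x y hxy
      by_cases hx : x = k
      · by_cases hy : y = k
        · rw [hx, hy]
        · exfalso
          obtain ⟨j, hj⟩ := Fin.exists_succAbove_eq hy
          rw [hx, Fin.insertNth_apply_same, ← hj, Fin.insertNth_apply_succAbove] at hxy
          exact (Fin.ne_of_lt (Fin.castSucc_lt_last _)) hxy.symm
      · obtain ⟨j, hj⟩ := Fin.exists_succAbove_eq hx
        by_cases hy : y = k
        · exfalso
          rw [hy, Fin.insertNth_apply_same, ← hj, Fin.insertNth_apply_succAbove] at hxy
          exact (Fin.ne_of_lt (Fin.castSucc_lt_last _)) hxy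
        · obtain ⟨j', hj'⟩ := Fin.exists_succAbove_eq hy
          rw [← hj, ← hj', Fin.insertNth_apply_succAbove,
            Fin.insertNth_apply_succAbove] at hxy
          rw [← hj, ← hj', π.injective (Fin.castSucc_injective _ hxy)]))

lemma insP_same (π : Equiv.Perm (Fin n)) (k : Fin (n+1)) : insP π k k = Fin.last n := by
  simp [insP]

lemma insP_succAbove (π : Equiv.Perm (Fin n)) (k : Fin (n+1)) (j : Fin n) :
    insP π k (k.succAbove j) = (π j).castSucc := by
  simp [insP]

lemma insP_symm_last (π : Equiv.Perm (Fin n)) (k : Fin (n+1)) :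
    (insP π k).symm (Fin.last n) = k :=
  (Equiv.symm_apply_eq _).mpr (insP_same π k).symm

noncomputable def remP (σ : Equiv.Perm (Fin (n+1))) : Equiv.Perm (Fin n) :=
  Equiv.ofBijective (fun i => (σ ((σ.symm (Fin.last n)).succAbove i)).castPred (by
      intro hl
      have h1 : (σ.symm (Fin.last n)).succAbove i = σ.symm (Fin.last n) := by
        have := congrArg σ.symm hl
        simpa using this
      exact Fin.succAbove_ne _ i h1))
    (Finite.injective_iff_bijective.mp (by
      intro x y hxy
      have h1 := congrArg Fin.castSucc hxy
      rw [Fin.castSucc_castPred, Fin.castSucc_castPred] at h1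
      exact Fin.succAbove_right_injective (σ.injective h1)))

lemma remP_val (σ : Equiv.Perm (Fin (n+1))) (i : Fin n) :
    ((remP σ i : Fin n) : ℕ) = ((σ ((σ.symm (Fin.last n)).succAbove i)) : ℕ) := rfl

lemma remP_insP (π : Equiv.Perm (Fin n)) (k : Fin (n+1)) : remP (insP π k) = π := by
  apply Equiv.ext
  intro i
  apply Fin.ext
  rw [remP_val, insP_symm_last, insP_succAbove]
  simp

lemma insP_remP (σ : Equiv.Perm (Fin (n+1))) :
    insP (remP σ) (σ.symm (Fin.last n)) = σ := by
  apply Equiv.ext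
  intro i
  rcases eq_or_ne i (σ.symm (Fin.last n)) with rfl | hi
  · rw [insP_same, Equiv.apply_symm_apply]
  · obtain ⟨j, rfl⟩ := Fin.exists_succAbove_eq hi
    rw [insP_succAbove]
    apply Fin.ext
    simp only [Fin.coe_castSucc]
    rfl

lemma prefix_remP (σ : Equiv.Perm (Fin (n+1))) {d : ℕ}
    (hd : d ≤ ((σ.symm (Fin.last n)) : ℕ)) (hp : IsPrefixInvariant σ d) :
    IsPrefixInvariant (remP σ) d := by
  intro i
  have h1 := hp ((σ.symm (Fin.last n)).succAbove i)
  have h2 := val_succAbove' (σ.symm (Fin.last n)) i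
  have h3 : ((remP σ i : Fin n) : ℕ) = ((σ ((σ.symm (Fin.last n)).succAbove i)) : ℕ) := rfl
  rw [h3, h1, h2]
  split_ifs with h4
  · exact Iff.rfl
  · omega

lemma prefix_of_remP (σ : Equiv.Perm (Fin (n+1))) {d : ℕ}
    (hd : d ≤ ((σ.symm (Fin.last n)) : ℕ)) (hp : IsPrefixInvariant (remP σ) d) :
    IsPrefixInvariant σ d := by
  intro i
  rcases eq_or_ne i (σ.symm (Fin.last n)) with rfl | hi
  · rw [Equiv.apply_symm_apply]
    have hk := (σ.symm (Fin.last n)).isLt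
    simp only [Fin.val_last]
    omega
  · obtain ⟨j, rfl⟩ := Fin.exists_succAbove_eq hi
    have h1 := hp j
    have h3 : ((remP σ j : Fin n) : ℕ) = ((σ ((σ.symm (Fin.last n)).succAbove j)) : ℕ) := rfl
    rw [h3] at h1
    have h2 := val_succAbove' (σ.symm (Fin.last n)) j
    rw [h1, h2]
    split_ifs with h4
    · exact Iff.rfl
    · omega

lemma prefix_le_pos (σ : Equiv.Perm (Fin (n+1))) {d : ℕ} (hdn : d ≤ n)
    (hp : IsPrefixInvariant σ d) : d ≤ ((σ.symm (Fin.last n)) : ℕ) := by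
  have h := hp (σ.symm (Fin.last n))
  rw [Equiv.apply_symm_apply] at h
  simp only [Fin.val_last] at h
  omega

lemma fbs_spec (hn : 1 ≤ n) (π : Equiv.Perm (Fin n)) :
    1 ≤ firstBlockSize π ∧ firstBlockSize π ≤ n ∧ IsPrefixInvariant π (firstBlockSize π) :=
  Nat.sInf_mem (⟨n, hn, le_refl n, fun i => iff_of_true (π i).isLt i.isLt⟩ :
    {d : ℕ | 1 ≤ d ∧ d ≤ n ∧ IsPrefixInvariant π d}.Nonempty)

lemma fbs_le {π : Equiv.Perm (Fin n)} {d : ℕ}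
    (h : 1 ≤ d ∧ d ≤ n ∧ IsPrefixInvariant π d) : firstBlockSize π ≤ d :=
  Nat.sInf_le h

lemma indec_iff (hn : 1 ≤ n) (σ : Equiv.Perm (Fin (n+1))) :
    IsSumIndecomposable σ ↔ ((σ.symm (Fin.last n) : ℕ) < firstBlockSize (remP σ)) := by
  constructor
  · intro hσ
    by_contra hcon
    push_neg at hcon
    obtain ⟨h1, h2, h3⟩ := fbs_spec hn (remP σ)
    have hp : IsPrefixInvariant σ (firstBlockSize (remP σ)) := prefix_of_remP σ hcon h3
    exact (not_indec_of_prefix σ h1 (by omega) hp) hσ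
  · intro h hex
    obtain ⟨d, hd1, hdm, hp⟩ := exists_prefix_of_not_indec σ (not_not_intro hex)
    have hdn : d ≤ n := by omega
    have hk := prefix_le_pos σ hdn hp
    have hle := fbs_le (π := remP σ) ⟨hd1, hdn, prefix_remP σ (by omega) hp⟩
    omega

end Aux2

/-- `∑_{π ∈ Sₙ} a(π)` equals the number of sum-indecomposable
permutations of size `n+1`. -/
theorem stmt5 (n : ℕ) (hn : 1 ≤ n) :
    ∑ π : Equiv.Perm (Fin n), firstBlockSize π =
      Nat.card {π : Equiv.Perm (Fin (n + 1)) // IsSumIndecomposable π} := by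
  classical
  rw [Nat.card_eq_fintype_card, Fintype.card_subtype]
  rw [show (∑ π : Equiv.Perm (Fin n), firstBlockSize π)
      = (Finset.univ.sigma fun π : Equiv.Perm (Fin n) =>
          Finset.range (firstBlockSize π)).card by
    rw [Finset.card_sigma]; simp]
  refine Finset.card_bij'
    (i := fun (x : Σ _ : Equiv.Perm (Fin n), ℕ)
        (hx : x ∈ Finset.univ.sigma fun π : Equiv.Perm (Fin n) =>
          Finset.range (firstBlockSize π)) =>
      insP x.1 ⟨x.2, by
        have h1 := Finset.mem_range.mp (Finset.mem_sigma.mp hx).2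
        have h2 := (fbs_spec hn x.1).2.1
        omega⟩)
    (j := fun σ _ => ⟨remP σ, ((σ.symm (Fin.last n)) : ℕ)⟩) ?_ ?_ ?_ ?_
  · intro x hx
    rw [Finset.mem_filter]
    refine ⟨Finset.mem_univ _, ?_⟩
    rw [indec_iff hn, insP_symm_last, remP_insP]
    exact Finset.mem_range.mp (Finset.mem_sigma.mp hx).2
  · intro σ hσ
    rw [Finset.mem_sigma]
    refine ⟨Finset.mem_univ _, Finset.mem_range.mpr ?_⟩
    exact (indec_iff hn σ).mp (Finset.mem_filter.mp hσ).2
  · intro x hx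
    obtain ⟨π, d⟩ := x
    refine Sigma.ext (remP_insP _ _) (heq_of_eq ?_)
    simp only [insP_symm_last]
  · intro σ hσ
    have hmk : (⟨((σ.symm (Fin.last n)) : ℕ), by omega⟩ : Fin (n+1)) = σ.symm (Fin.last n) :=
      Fin.ext rfl
    show insP (remP σ) _ = σ
    rw [hmk, insP_remP]
end
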